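/- arXiv:2306.05015 — 2 statements merged into one kernel-verified Lean document; each statement's English description precedes it below -/
import Mathlib

section
/- For every pair of indices j, k with 1 ≤ j, k ≤ 8 and every pair of squares R ⊂ Q with Q, R ∈ D, one has S_{Q, f_{Q,j,k}(R)} = ε_{j,k} f_{j,k}(S_{Q,R}), where ε_{j,k} ∈ {+1, −1} is a sign depending only on j and k; in particular |S_{Q, f_{Q,j,k}(R)}| = |S_{Q,R}|. -/
open MeasureTheory Filter Set Topology
open scoped ENNReal

noncomputable section

/-- Side length of generation-`n` squares: `s n = λ₁ ⋯ λₙ` (here `Λ k` is `λ_{k+1}`). -/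
def sideLen (Λ : ℕ → ℝ) (n : ℕ) : ℝ := ∏ k ∈ Finset.range n, Λ k

/-- Lower-left corner of the generation-`n` square encoded by the word `w`. -/
def cornerPt (Λ : ℕ → ℝ) (w : ℕ → Bool × Bool) (n : ℕ) : ℂ :=
  ∑ k ∈ Finset.range n,
    (((if (w k).1 then sideLen Λ k - sideLen Λ (k + 1) else 0 : ℝ) : ℂ) +
      ((if (w k).2 then sideLen Λ k - sideLen Λ (k + 1) else 0 : ℝ) : ℂ) * Complex.I)

/-- The (closed) generation-`n` square encoded by the word `w`. -/
def cSquare (Λ : ℕ → ℝ) (w : ℕ → Bool × Bool) (n : ℕ) : Set ℂ :=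
  {z : ℂ | (cornerPt Λ w n).re ≤ z.re ∧ z.re ≤ (cornerPt Λ w n).re + sideLen Λ n ∧
    (cornerPt Λ w n).im ≤ z.im ∧ z.im ≤ (cornerPt Λ w n).im + sideLen Λ n}

/-- The family `𝒟_n` of generation-`n` squares. -/
def genSq (Λ : ℕ → ℝ) (n : ℕ) : Set (Set ℂ) := {Q | ∃ w, Q = cSquare Λ w n}

/-- The planar Cantor set `K = ⋂ₙ ⋃ⱼ Qⱼⁿ`. -/
def cantorK (Λ : ℕ → ℝ) : Set ℂ := ⋂ n, ⋃ w : ℕ → Bool × Bool, cSquare Λ w n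

/-- The linear density `a_n = 4^{-n}/s_n` at generation `n`. -/
def linDensity (Λ : ℕ → ℝ) (n : ℕ) : ℝ := 1 / (4 ^ n * sideLen Λ n)

/-- `S_Q`: the martingale value at a square `Q`,
`S_Q = μ(Q)⁻¹ ∫_Q ∫_{K ∖ Q} (z-y)⁻¹ dμ(y) dμ(z)`. -/
def SQ (Λ : ℕ → ℝ) (μ : Measure ℂ) (Q : Set ℂ) : ℂ :=
  ⨍ z in Q, ∫ y in cantorK Λ \ Q, (z - y)⁻¹ ∂μ ∂μ

/-- `S_{Q,R}`: the relative martingale started at `Q`, evaluated at `R ⊆ Q`,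
`S_{Q,R} = μ(R)⁻¹ ∫_R ∫_{Q ∖ R} (z-y)⁻¹ dμ(y) dμ(z)`. -/
def Srel (μ : Measure ℂ) (Q R : Set ℂ) : ℂ :=
  ⨍ z in R, ∫ y in Q \ R, (z - y)⁻¹ ∂μ ∂μ

/-- The octant `σ_j`, `1 ≤ j ≤ 8`: points with argument in `[(j-1)π/4, jπ/4]`. -/
def octant (j : ℕ) : Set ℂ :=
  {w : ℂ | ∃ r : ℝ, 0 ≤ r ∧ ∃ φ : ℝ, ((j : ℝ) - 1) * Real.pi / 4 ≤ φ ∧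
    φ ≤ (j : ℝ) * Real.pi / 4 ∧ w = (r : ℂ) * Complex.exp (φ * Complex.I)}

/-- Reflection in the imaginary axis: `f₁(x+iy) = -x+iy`. -/
def sym1 (z : ℂ) : ℂ := -(starRingEnd ℂ z)

/-- Reflection in the real axis: `f₂(x+iy) = x-iy`. -/
def sym2 (z : ℂ) : ℂ := starRingEnd ℂ z

/-- Reflection in the main diagonal: `f₃(x+iy) = y+ix`. -/
def sym3 (z : ℂ) : ℂ := Complex.I * starRingEnd ℂ z

/-- The center of the generation-`n` square encoded by `w`. -/
def squareCenter (Λ : ℕ → ℝ) (w : ℕ → Bool × Bool) (n : ℕ) : ℂ :=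
  cornerPt Λ w n + ((sideLen Λ n / 2 : ℝ) : ℂ) + ((sideLen Λ n / 2 : ℝ) : ℂ) * Complex.I

namespace CantorAux

/-- 1D corner coordinate. -/
def c1 (Λ : ℕ → ℝ) (b : ℕ → Bool) (n : ℕ) : ℝ :=
  ∑ k ∈ Finset.range n, (if b k then sideLen Λ k - sideLen Λ (k + 1) else 0)

variable {Λ : ℕ → ℝ} {lam : ℝ}

section basic

variable (hlam : lam < 1 / 2) (hΛ : ∀ n, 1 / 4 ≤ Λ n ∧ Λ n ≤ lam)
include hΛ

theorem sideLen_pos (n : ℕ) : 0 < sideLen Λ n := by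
  refine Finset.prod_pos fun k _ => lt_of_lt_of_le (by norm_num) (hΛ k).1

include hlam in
theorem two_sideLen_lt (k : ℕ) : 2 * sideLen Λ (k + 1) < sideLen Λ k := by
  have h1 : sideLen Λ (k + 1) = sideLen Λ k * Λ k := Finset.prod_range_succ _ _
  have h2 := sideLen_pos hΛ k
  have h3 := (hΛ k).2
  nlinarith

include hlam in
theorem sideLen_anti {m n : ℕ} (h : m ≤ n) : sideLen Λ n ≤ sideLen Λ m := by
  induction n, h using Nat.le_induction with
  | base => exact le_rfl
  | succ n hmn ih =>
    have h1 : sideLen Λ (n + 1) = sideLen Λ n * Λ n := Finset.prod_range_succ _ _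
    have h2 := sideLen_pos hΛ n
    have h3 := (hΛ n).2
    have h4 : lam < 1 := by linarith
    nlinarith

end basic

theorem sum_tele (Λ : ℕ → ℝ) {m n : ℕ} (h : m ≤ n) :
    ∑ k ∈ Finset.Ico m n, (sideLen Λ k - sideLen Λ (k + 1)) = sideLen Λ m - sideLen Λ n := by
  induction n, h using Nat.le_induction with
  | base => simp
  | succ n hmn ih => rw [Finset.sum_Ico_succ_top hmn, ih]; ring

theorem c1_add (b : ℕ → Bool) {m n : ℕ} (h : m ≤ n) :
    c1 Λ b n = c1 Λ b m +
      ∑ k ∈ Finset.Ico m n, (if b k then sideLen Λ k - sideLen Λ (k + 1) else 0) := by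
  simp only [c1, Finset.range_eq_Ico]
  exact (Finset.sum_Ico_consecutive _ (Nat.zero_le m) h).symm

theorem c1_congr {b b' : ℕ → Bool} {n : ℕ} (h : ∀ k < n, b k = b' k) :
    c1 Λ b n = c1 Λ b' n := by
  refine Finset.sum_congr rfl fun k hk => ?_
  rw [h k (Finset.mem_range.1 hk)]

variable (hlam : lam < 1 / 2) (hΛ : ∀ n, 1 / 4 ≤ Λ n ∧ Λ n ≤ lam)
include hlam hΛ

theorem c1_nest (b : ℕ → Bool) {m n : ℕ} (h : m ≤ n) :
    c1 Λ b m ≤ c1 Λ b n ∧ c1 Λ b n + sideLen Λ n ≤ c1 Λ b m + sideLen Λ m := by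
  have key := c1_add (Λ := Λ) b h
  have h0 : (0:ℝ) ≤ ∑ k ∈ Finset.Ico m n, (if b k then sideLen Λ k - sideLen Λ (k + 1) else 0) := by
    refine Finset.sum_nonneg fun k _ => ?_
    split
    · have := two_sideLen_lt hlam hΛ k
      have := sideLen_pos hΛ (k + 1)
      linarith
    · exact le_rfl
  have h1 : ∑ k ∈ Finset.Ico m n, (if b k then sideLen Λ k - sideLen Λ (k + 1) else 0)
      ≤ sideLen Λ m - sideLen Λ n := by
    rw [← sum_tele Λ h]
    refine Finset.sum_le_sum fun k _ => ?_
    split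
    · exact le_rfl
    · have := two_sideLen_lt hlam hΛ k
      have := sideLen_pos hΛ (k + 1)
      linarith
  constructor <;> linarith

theorem c1_sep {b b' : ℕ → Bool} {k0 n : ℕ} (hk : k0 < n) (h1 : b k0 = true)
    (h2 : b' k0 = false) (hagree : ∀ k < k0, b k = b' k) :
    c1 Λ b' n + sideLen Λ n < c1 Λ b n := by
  have e1 : c1 Λ b (k0 + 1) = c1 Λ b k0 + (sideLen Λ k0 - sideLen Λ (k0 + 1)) := by
    simp only [c1, Finset.sum_range_succ, h1, if_true]
  have e2 : c1 Λ b' (k0 + 1) = c1 Λ b' k0 := by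
    simp only [c1, Finset.sum_range_succ, h2]
    simp
  have e3 : c1 Λ b k0 = c1 Λ b' k0 := c1_congr hagree
  have n1 := (c1_nest hlam hΛ b (Nat.succ_le_of_lt hk)).1
  have n2 := (c1_nest hlam hΛ b' (Nat.succ_le_of_lt hk)).2
  have := two_sideLen_lt hlam hΛ k0
  linarith

theorem c1_eq_of_overlap {b b' : ℕ → Bool} {n : ℕ}
    (h1 : c1 Λ b n ≤ c1 Λ b' n + sideLen Λ n) (h2 : c1 Λ b' n ≤ c1 Λ b n + sideLen Λ n) :
    c1 Λ b n = c1 Λ b' n := by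
  classical
  by_cases hd : ∃ k, k < n ∧ b k ≠ b' k
  · obtain ⟨hk0n, hk0⟩ := Nat.find_spec hd
    have hagree : ∀ k < Nat.find hd, b k = b' k := by
      intro k hk
      by_contra hc
      have hkn : k < n := lt_trans hk hk0n
      exact absurd (Nat.find_le ⟨hkn, hc⟩) (not_le.2 hk)
    rcases Bool.eq_false_or_eq_true (b (Nat.find hd)) with hb | hb
    · -- hb : b k0 = true
      have hb' : b' (Nat.find hd) = false := by
        rcases Bool.eq_false_or_eq_true (b' (Nat.find hd)) with h | h
        · exact absurd (hb.trans h.symm) hk0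
        · exact h
      have := c1_sep hlam hΛ hk0n hb hb' hagree
      linarith
    · -- hb : b k0 = false
      have hb' : b' (Nat.find hd) = true := by
        rcases Bool.eq_false_or_eq_true (b' (Nat.find hd)) with h | h
        · exact h
        · exact absurd (hb.trans h.symm) hk0
      have := c1_sep hlam hΛ hk0n hb' hb fun k hk => (hagree k hk).symm
      linarith

  · push_neg at hd
    exact c1_congr fun k hk => hd k hk

omit hlam hΛ in
theorem cornerPt_re (w : ℕ → Bool × Bool) (n : ℕ) :
    (cornerPt Λ w n).re = c1 Λ (fun k => (w k).1) n := by
  rw [cornerPt, Complex.re_sum, c1]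
  refine Finset.sum_congr rfl fun k _ => ?_
  simp

omit hlam hΛ in
theorem cornerPt_im (w : ℕ → Bool × Bool) (n : ℕ) :
    (cornerPt Λ w n).im = c1 Λ (fun k => (w k).2) n := by
  rw [cornerPt, Complex.im_sum, c1]
  refine Finset.sum_congr rfl fun k _ => ?_
  simp

omit hlam hΛ in
theorem mem_cSquare {z : ℂ} {w : ℕ → Bool × Bool} {n : ℕ} :
    z ∈ cSquare Λ w n ↔
      c1 Λ (fun k => (w k).1) n ≤ z.re ∧ z.re ≤ c1 Λ (fun k => (w k).1) n + sideLen Λ n ∧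
      c1 Λ (fun k => (w k).2) n ≤ z.im ∧ z.im ≤ c1 Λ (fun k => (w k).2) n + sideLen Λ n := by
  rw [cSquare, Set.mem_setOf_eq, cornerPt_re, cornerPt_im]

omit hlam in
theorem cSquare_nonempty (w : ℕ → Bool × Bool) (n : ℕ) : (cSquare Λ w n).Nonempty := by
  refine ⟨cornerPt Λ w n, ?_⟩
  have := sideLen_pos hΛ n
  rw [cSquare]
  constructor
  · exact le_rfl
  refine ⟨by linarith, le_rfl, by linarith⟩

omit hlam hΛ in
theorem cSquare_eq_of_c1 {w w' : ℕ → Bool × Bool} {n : ℕ}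
    (h1 : c1 Λ (fun k => (w k).1) n = c1 Λ (fun k => (w' k).1) n)
    (h2 : c1 Λ (fun k => (w k).2) n = c1 Λ (fun k => (w' k).2) n) :
    cSquare Λ w n = cSquare Λ w' n := by
  ext z
  rw [mem_cSquare, mem_cSquare, h1, h2]

theorem cSquare_mono (w : ℕ → Bool × Bool) {m n : ℕ} (h : m ≤ n) :
    cSquare Λ w n ⊆ cSquare Λ w m := by
  intro z hz
  rw [mem_cSquare] at hz ⊢
  obtain ⟨n11, n12⟩ := c1_nest hlam hΛ (fun k => (w k).1) h
  obtain ⟨n21, n22⟩ := c1_nest hlam hΛ (fun k => (w k).2) h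
  refine ⟨by linarith [hz.1], by linarith [hz.2.1], by linarith [hz.2.2.1], by linarith [hz.2.2.2]⟩

theorem corner_eq_of_mem {z : ℂ} {w w' : ℕ → Bool × Bool} {n : ℕ}
    (hz : z ∈ cSquare Λ w n) (hz' : z ∈ cSquare Λ w' n) :
    c1 Λ (fun k => (w k).1) n = c1 Λ (fun k => (w' k).1) n ∧
    c1 Λ (fun k => (w k).2) n = c1 Λ (fun k => (w' k).2) n := by
  rw [mem_cSquare] at hz hz'
  exact ⟨c1_eq_of_overlap hlam hΛ (by linarith [hz.1, hz'.2.1]) (by linarith [hz'.1, hz.2.1]),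
    c1_eq_of_overlap hlam hΛ (by linarith [hz.2.2.1, hz'.2.2.2])
      (by linarith [hz'.2.2.1, hz.2.2.2])⟩

/-- If a generation-`n` square meets a generation-`m` square (`m ≤ n`), it is contained in it,
and their level-`m` corners agree. -/
theorem nested_of_inter {w wQ : ℕ → Bool × Bool} {m n : ℕ} (hmn : m ≤ n) {z : ℂ}
    (hz : z ∈ cSquare Λ w n) (hzQ : z ∈ cSquare Λ wQ m) :
    c1 Λ (fun k => (w k).1) m = c1 Λ (fun k => (wQ k).1) m ∧
    c1 Λ (fun k => (w k).2) m = c1 Λ (fun k => (wQ k).2) m ∧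
    cSquare Λ w n ⊆ cSquare Λ wQ m := by
  have hzm : z ∈ cSquare Λ w m := cSquare_mono hlam hΛ w hmn hz
  obtain ⟨e1, e2⟩ := corner_eq_of_mem hlam hΛ hzm hzQ
  exact ⟨e1, e2, (cSquare_eq_of_c1 e1 e2) ▸ cSquare_mono hlam hΛ w hmn⟩

omit hlam hΛ in
theorem c1_if (b₁ b₂ : ℕ → Bool) {m n : ℕ} (h : m ≤ n) :
    c1 Λ (fun k => if k < m then b₁ k else b₂ k) n = c1 Λ b₁ m + (c1 Λ b₂ n - c1 Λ b₂ m) := by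
  rw [c1_add _ h]
  have e1 : c1 Λ (fun k => if k < m then b₁ k else b₂ k) m = c1 Λ b₁ m :=
    c1_congr fun k hk => by simp [hk]
  have e2 : ∑ k ∈ Finset.Ico m n,
        (if (if k < m then b₁ k else b₂ k) then sideLen Λ k - sideLen Λ (k + 1) else 0)
      = ∑ k ∈ Finset.Ico m n, (if b₂ k then sideLen Λ k - sideLen Λ (k + 1) else 0) :=
    Finset.sum_congr rfl fun k hk => by
      have : ¬ k < m := not_lt.2 (Finset.mem_Ico.1 hk).1
      simp [this]
  rw [e1, e2, c1_add (Λ := Λ) b₂ h]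
  ring

omit hlam hΛ in
theorem c1_not (b : ℕ → Bool) (n : ℕ) :
    c1 Λ (fun k => !(b k)) n = sideLen Λ 0 - sideLen Λ n - c1 Λ b n := by
  have ht : ∑ k ∈ Finset.Ico 0 n, (sideLen Λ k - sideLen Λ (k + 1))
      = sideLen Λ 0 - sideLen Λ n := sum_tele Λ (Nat.zero_le n)
  have e : ∀ k : ℕ, (if !(b k) then sideLen Λ k - sideLen Λ (k + 1) else 0)
      = (sideLen Λ k - sideLen Λ (k + 1)) - (if b k then sideLen Λ k - sideLen Λ (k + 1) else 0) := by
    intro k; cases hb : b k <;> simp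
  rw [c1, Finset.sum_congr rfl fun k _ => e k, Finset.sum_sub_distrib, Finset.range_eq_Ico, ht]
  rw [c1, Finset.range_eq_Ico]

omit hlam hΛ in
theorem c1_if_not (b₁ b₂ : ℕ → Bool) {m n : ℕ} (h : m ≤ n) :
    c1 Λ (fun k => if k < m then b₁ k else !(b₂ k)) n
      = c1 Λ b₁ m + (sideLen Λ m - sideLen Λ n) - (c1 Λ b₂ n - c1 Λ b₂ m) := by
  rw [c1_if b₁ (fun k => !(b₂ k)) h, c1_not, c1_not]
  ring

omit hlam hΛ in
theorem squareCenter_re (w : ℕ → Bool × Bool) (n : ℕ) :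
    (squareCenter Λ w n).re = c1 Λ (fun k => (w k).1) n + sideLen Λ n / 2 := by
  simp [squareCenter, cornerPt_re, Complex.add_re, Complex.ofReal_re, Complex.mul_re,
    Complex.I_re, Complex.I_im, Complex.ofReal_im]

omit hlam hΛ in
theorem squareCenter_im (w : ℕ → Bool × Bool) (n : ℕ) :
    (squareCenter Λ w n).im = c1 Λ (fun k => (w k).2) n + sideLen Λ n / 2 := by
  simp [squareCenter, cornerPt_im, Complex.add_im, Complex.ofReal_re, Complex.mul_im,
    Complex.I_re, Complex.I_im, Complex.ofReal_im]

/-- Rotating a sub-square of `Q` by `u ∈ {1,-1,i,-i}` about the center of `Q`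
yields another square of the same generation (explicitly given by a modified word). -/
theorem image_square {m n : ℕ} (hmn : m ≤ n) (wQ w : ℕ → Bool × Bool)
    (h1 : c1 Λ (fun k => (w k).1) m = c1 Λ (fun k => (wQ k).1) m)
    (h2 : c1 Λ (fun k => (w k).2) m = c1 Λ (fun k => (wQ k).2) m)
    {u : ℂ} (hu : u = 1 ∨ u = -1 ∨ u = Complex.I ∨ u = -Complex.I) :
    ∃ w' : ℕ → Bool × Bool, (∀ k, k < m → w' k = w k) ∧
      (fun x => u * (x - squareCenter Λ wQ m) + squareCenter Λ wQ m) '' cSquare Λ w n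
        = cSquare Λ w' n := by
  set c := squareCenter Λ wQ m with hc
  have hcre : c.re = c1 Λ (fun k => (w k).1) m + sideLen Λ m / 2 := by
    rw [hc, squareCenter_re, h1]
  have hcim : c.im = c1 Λ (fun k => (w k).2) m + sideLen Λ m / 2 := by
    rw [hc, squareCenter_im, h2]
  obtain ⟨na1, na2⟩ := c1_nest hlam hΛ (fun k => (w k).1) hmn
  obtain ⟨nb1, nb2⟩ := c1_nest hlam hΛ (fun k => (w k).2) hmn
  rcases hu with rfl | rfl | rfl | rfl
  · refine ⟨w, fun k _ => rfl, ?_⟩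
    have : (fun x : ℂ => 1 * (x - c) + c) = id := funext fun x => by simp
    rw [this, Set.image_id]
  · -- u = -1
    refine ⟨fun k => (if k < m then (w k).1 else !(w k).1,
      if k < m then (w k).2 else !(w k).2), fun k hk => by simp [hk], ?_⟩
    have ca : c1 Λ (fun k => if k < m then (w k).1 else !(w k).1) n
        = c1 Λ (fun k => (w k).1) m + (sideLen Λ m - sideLen Λ n)
          - (c1 Λ (fun k => (w k).1) n - c1 Λ (fun k => (w k).1) m) :=
      c1_if_not _ _ hmn
    have cb : c1 Λ (fun k => if k < m then (w k).2 else !(w k).2) n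
        = c1 Λ (fun k => (w k).2) m + (sideLen Λ m - sideLen Λ n)
          - (c1 Λ (fun k => (w k).2) n - c1 Λ (fun k => (w k).2) m) :=
      c1_if_not _ _ hmn
    have hli : Function.LeftInverse (fun z : ℂ => -1 * (z - c) + c)
        (fun x : ℂ => -1 * (x - c) + c) := fun x => by ring
    have himg : (fun x : ℂ => -1 * (x - c) + c) '' cSquare Λ w n
        = (fun z : ℂ => -1 * (z - c) + c) ⁻¹' cSquare Λ w n :=
      congrFun (Set.image_eq_preimage_of_inverse hli hli) _
    rw [himg]
    ext z
    rw [Set.mem_preimage, mem_cSquare, mem_cSquare]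
    have hre : ((-1 : ℂ) * (z - c) + c).re = 2 * c.re - z.re := by
      simp only [Complex.add_re, Complex.mul_re, Complex.sub_re, Complex.sub_im,
        Complex.neg_re, Complex.neg_im, Complex.one_re, Complex.one_im]
      ring
    have him : ((-1 : ℂ) * (z - c) + c).im = 2 * c.im - z.im := by
      simp only [Complex.add_im, Complex.mul_im, Complex.sub_re, Complex.sub_im,
        Complex.neg_re, Complex.neg_im, Complex.one_re, Complex.one_im]
      ring
    have eca : c1 Λ (fun k => ((fun k => (if k < m then (w k).1 else !(w k).1,
        if k < m then (w k).2 else !(w k).2)) k).1) n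
        = c1 Λ (fun k => if k < m then (w k).1 else !(w k).1) n := c1_congr fun k _ => rfl
    have ecb : c1 Λ (fun k => ((fun k => (if k < m then (w k).1 else !(w k).1,
        if k < m then (w k).2 else !(w k).2)) k).2) n
        = c1 Λ (fun k => if k < m then (w k).2 else !(w k).2) n := c1_congr fun k _ => rfl
    rw [hre, him, eca, ecb, ca, cb]
    constructor
    · rintro ⟨p1, p2, p3, p4⟩
      exact ⟨by linarith, by linarith, by linarith, by linarith⟩
    · rintro ⟨p1, p2, p3, p4⟩
      exact ⟨by linarith, by linarith, by linarith, by linarith⟩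
  · -- u = I
    refine ⟨fun k => (if k < m then (w k).1 else !(w k).2,
      if k < m then (w k).2 else (w k).1), fun k hk => by simp [hk], ?_⟩
    have ca : c1 Λ (fun k => if k < m then (w k).1 else !(w k).2) n
        = c1 Λ (fun k => (w k).1) m + (sideLen Λ m - sideLen Λ n)
          - (c1 Λ (fun k => (w k).2) n - c1 Λ (fun k => (w k).2) m) :=
      c1_if_not _ _ hmn
    have cb : c1 Λ (fun k => if k < m then (w k).2 else (w k).1) n
        = c1 Λ (fun k => (w k).2) m
          + (c1 Λ (fun k => (w k).1) n - c1 Λ (fun k => (w k).1) m) :=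
      c1_if _ _ hmn
    have hli : Function.LeftInverse (fun z : ℂ => -Complex.I * (z - c) + c)
        (fun x : ℂ => Complex.I * (x - c) + c) := fun x => by
      show -Complex.I * ((Complex.I * (x - c) + c) - c) + c = x
      linear_combination (c - x) * Complex.I_mul_I
    have hri : Function.RightInverse (fun z : ℂ => -Complex.I * (z - c) + c)
        (fun x : ℂ => Complex.I * (x - c) + c) := fun x => by
      show Complex.I * ((-Complex.I * (x - c) + c) - c) + c = x
      linear_combination (c - x) * Complex.I_mul_I
    have himg : (fun x : ℂ => Complex.I * (x - c) + c) '' cSquare Λ w n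
        = (fun z : ℂ => -Complex.I * (z - c) + c) ⁻¹' cSquare Λ w n :=
      congrFun (Set.image_eq_preimage_of_inverse hli hri) _
    rw [himg]
    ext z
    rw [Set.mem_preimage, mem_cSquare, mem_cSquare]
    have hre : ((-Complex.I) * (z - c) + c).re = z.im - c.im + c.re := by
      simp only [Complex.add_re, Complex.mul_re, Complex.sub_re, Complex.sub_im,
        Complex.neg_re, Complex.neg_im, Complex.I_re, Complex.I_im]
      ring
    have him : ((-Complex.I) * (z - c) + c).im = c.re - z.re + c.im := by
      simp only [Complex.add_im, Complex.mul_im, Complex.sub_re, Complex.sub_im,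
        Complex.neg_re, Complex.neg_im, Complex.I_re, Complex.I_im]
      ring
    have eca : c1 Λ (fun k => ((fun k => (if k < m then (w k).1 else !(w k).2,
        if k < m then (w k).2 else (w k).1)) k).1) n
        = c1 Λ (fun k => if k < m then (w k).1 else !(w k).2) n := c1_congr fun k _ => rfl
    have ecb : c1 Λ (fun k => ((fun k => (if k < m then (w k).1 else !(w k).2,
        if k < m then (w k).2 else (w k).1)) k).2) n
        = c1 Λ (fun k => if k < m then (w k).2 else (w k).1) n := c1_congr fun k _ => rfl
    rw [hre, him, eca, ecb, ca, cb]
    constructor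
    · rintro ⟨p1, p2, p3, p4⟩
      exact ⟨by linarith, by linarith, by linarith, by linarith⟩
    · rintro ⟨p1, p2, p3, p4⟩
      exact ⟨by linarith, by linarith, by linarith, by linarith⟩
  · -- u = -I
    refine ⟨fun k => (if k < m then (w k).1 else (w k).2,
      if k < m then (w k).2 else !(w k).1), fun k hk => by simp [hk], ?_⟩
    have ca : c1 Λ (fun k => if k < m then (w k).1 else (w k).2) n
        = c1 Λ (fun k => (w k).1) m
          + (c1 Λ (fun k => (w k).2) n - c1 Λ (fun k => (w k).2) m) :=
      c1_if _ _ hmn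
    have cb : c1 Λ (fun k => if k < m then (w k).2 else !(w k).1) n
        = c1 Λ (fun k => (w k).2) m + (sideLen Λ m - sideLen Λ n)
          - (c1 Λ (fun k => (w k).1) n - c1 Λ (fun k => (w k).1) m) :=
      c1_if_not _ _ hmn
    have hli : Function.LeftInverse (fun z : ℂ => Complex.I * (z - c) + c)
        (fun x : ℂ => -Complex.I * (x - c) + c) := fun x => by
      show Complex.I * ((-Complex.I * (x - c) + c) - c) + c = x
      linear_combination (c - x) * Complex.I_mul_I
    have hri : Function.RightInverse (fun z : ℂ => Complex.I * (z - c) + c)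
        (fun x : ℂ => -Complex.I * (x - c) + c) := fun x => by
      show -Complex.I * ((Complex.I * (x - c) + c) - c) + c = x
      linear_combination (c - x) * Complex.I_mul_I
    have himg : (fun x : ℂ => -Complex.I * (x - c) + c) '' cSquare Λ w n
        = (fun z : ℂ => Complex.I * (z - c) + c) ⁻¹' cSquare Λ w n :=
      congrFun (Set.image_eq_preimage_of_inverse hli hri) _
    rw [himg]
    ext z
    rw [Set.mem_preimage, mem_cSquare, mem_cSquare]
    have hre : ((Complex.I) * (z - c) + c).re = c.im - z.im + c.re := by
      simp only [Complex.add_re, Complex.mul_re, Complex.sub_re, Complex.sub_im,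
        Complex.I_re, Complex.I_im]
      ring
    have him : ((Complex.I) * (z - c) + c).im = z.re - c.re + c.im := by
      simp only [Complex.add_im, Complex.mul_im, Complex.sub_re, Complex.sub_im,
        Complex.I_re, Complex.I_im]
      ring
    have eca : c1 Λ (fun k => ((fun k => (if k < m then (w k).1 else (w k).2,
        if k < m then (w k).2 else !(w k).1)) k).1) n
        = c1 Λ (fun k => if k < m then (w k).1 else (w k).2) n := c1_congr fun k _ => rfl
    have ecb : c1 Λ (fun k => ((fun k => (if k < m then (w k).1 else (w k).2,
        if k < m then (w k).2 else !(w k).1)) k).2) n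
        = c1 Λ (fun k => if k < m then (w k).2 else !(w k).1) n := c1_congr fun k _ => rfl
    rw [hre, him, eca, ecb, ca, cb]
    constructor
    · rintro ⟨p1, p2, p3, p4⟩
      exact ⟨by linarith, by linarith, by linarith, by linarith⟩
    · rintro ⟨p1, p2, p3, p4⟩
      exact ⟨by linarith, by linarith, by linarith, by linarith⟩

omit hlam hΛ in
theorem gen_compl {α} {P : Set (Set α)} {t : Set α}
    (h : MeasurableSet[MeasurableSpace.generateFrom P] t) :
    MeasurableSet[MeasurableSpace.generateFrom P] tᶜ := h.compl

omit hlam hΛ in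
theorem gen_iUnion {α} {P : Set (Set α)} {ι : Sort*} [Countable ι] (f : ι → Set α)
    (h : ∀ i, MeasurableSet[MeasurableSpace.generateFrom P] (f i)) :
    MeasurableSet[MeasurableSpace.generateFrom P] (⋃ i, f i) := MeasurableSet.iUnion h

section Measures

/-- Extension of a finite word by `(false,false)`. -/
def ext3 {q : ℕ} (v : Fin q → Bool × Bool) : ℕ → Bool × Bool :=
  fun k => if h : k < q then v ⟨k, h⟩ else (false, false)

omit hlam hΛ in
theorem cSquare_congr {w w' : ℕ → Bool × Bool} {n : ℕ} (h : ∀ k < n, w k = w' k) :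
    cSquare Λ w n = cSquare Λ w' n :=
  cSquare_eq_of_c1 (c1_congr fun k hk => by rw [h k hk]) (c1_congr fun k hk => by rw [h k hk])

omit hlam hΛ in
theorem measurableSet_cSquare (w : ℕ → Bool × Bool) (n : ℕ) :
    MeasurableSet (cSquare Λ w n) := by
  have : cSquare Λ w n = Complex.re ⁻¹'
        Set.Icc (cornerPt Λ w n).re ((cornerPt Λ w n).re + sideLen Λ n) ∩
      Complex.im ⁻¹' Set.Icc (cornerPt Λ w n).im ((cornerPt Λ w n).im + sideLen Λ n) := by
    ext z
    simp only [cSquare, Set.mem_setOf_eq, Set.mem_inter_iff, Set.mem_preimage, Set.mem_Icc]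
    tauto
  rw [this]
  exact (Complex.measurable_re measurableSet_Icc).inter (Complex.measurable_im measurableSet_Icc)

omit hlam hΛ in
theorem union_gen (n : ℕ) :
    ⋃ w : ℕ → Bool × Bool, cSquare Λ w n
      = ⋃ v : Fin n → Bool × Bool, cSquare Λ (ext3 v) n := by
  apply Set.Subset.antisymm
  · refine Set.iUnion_subset fun w => ?_
    have : cSquare Λ w n = cSquare Λ (ext3 fun i : Fin n => w i) n :=
      cSquare_congr fun k hk => by simp [ext3, hk]
    rw [this]
    exact Set.subset_iUnion (fun v : Fin n → Bool × Bool => cSquare Λ (ext3 v) n)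
      (fun i : Fin n => w i)
  · exact Set.iUnion_subset fun v =>
      Set.subset_iUnion (fun w : ℕ → Bool × Bool => cSquare Λ w n) (ext3 v)

omit hlam hΛ in
theorem measurableSet_cantorK : MeasurableSet (cantorK Λ) := by
  rw [cantorK]
  refine MeasurableSet.iInter fun n => ?_
  rw [union_gen]
  exact MeasurableSet.iUnion fun v => measurableSet_cSquare _ _

omit hlam hΛ in
theorem mem_cantorK {z : ℂ} : z ∈ cantorK Λ ↔ ∀ n, ∃ w, z ∈ cSquare Λ w n := by
  simp [cantorK]

/-- Every open set agrees with a `generateFrom`-measurable set on `K`. -/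
theorem exists_gen_of_measurable (s : Set ℂ) (hs : MeasurableSet s) :
    ∃ t, MeasurableSet[MeasurableSpace.generateFrom
        {S : Set ℂ | ∃ (n : ℕ) (w : ℕ → Bool × Bool), S = cSquare Λ w n}] t ∧
      s ∩ cantorK Λ = t ∩ cantorK Λ := by
  set P : Set (Set ℂ) := {S : Set ℂ | ∃ (n : ℕ) (w : ℕ → Bool × Bool), S = cSquare Λ w n}
    with hP
  let m' : MeasurableSpace ℂ :=
    { MeasurableSet' := fun s => ∃ t, MeasurableSet[MeasurableSpace.generateFrom P] t ∧
        s ∩ cantorK Λ = t ∩ cantorK Λ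
      measurableSet_empty := ⟨∅, (MeasurableSpace.generateFrom P).measurableSet_empty, rfl⟩
      measurableSet_compl := by
        rintro s ⟨t, ht, heq⟩
        refine ⟨tᶜ, gen_compl ht, ?_⟩
        have h := Set.ext_iff.1 heq
        ext x
        constructor
        · rintro ⟨hx, hxK⟩
          exact ⟨fun hxt => hx ((h x).2 ⟨hxt, hxK⟩).1, hxK⟩
        · rintro ⟨hx, hxK⟩
          exact ⟨fun hxs => hx ((h x).1 ⟨hxs, hxK⟩).1, hxK⟩
      measurableSet_iUnion := by
        intro f hf
        choose t ht heq using hf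
        refine ⟨⋃ i, t i, gen_iUnion t ht, ?_⟩
        rw [Set.iUnion_inter, Set.iUnion_inter]
        exact Set.iUnion_congr heq }
  have hopen : ∀ s : Set ℂ, IsOpen s → m'.MeasurableSet' s := by
    intro s hso
    refine ⟨⋃ (q : ℕ) (v : Fin q → Bool × Bool) (_ : cSquare Λ (ext3 v) q ⊆ s),
      cSquare Λ (ext3 v) q, ?_, ?_⟩
    · refine gen_iUnion _ fun q => gen_iUnion _ fun v => gen_iUnion _ fun _ => ?_
      exact MeasurableSpace.measurableSet_generateFrom ⟨q, ext3 v, rfl⟩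
    · ext x
      constructor
      · rintro ⟨hxs, hxK⟩
        refine ⟨?_, hxK⟩
        obtain ⟨ε, hε, hball⟩ := Metric.isOpen_iff.1 hso x hxs
        -- choose q with 2 * sideLen Λ q < ε
        have hlam0 : (0:ℝ) ≤ lam := le_trans (by norm_num) (le_trans (hΛ 0).1 (hΛ 0).2)
        have hlam1 : lam < 1 := by linarith
        obtain ⟨q, hq⟩ := exists_pow_lt_of_lt_one (by linarith : (0:ℝ) < ε / 2) hlam1
        have hside : sideLen Λ q ≤ lam ^ q := by
          calc sideLen Λ q ≤ ∏ _k ∈ Finset.range q, lam :=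
                Finset.prod_le_prod (fun k _ => le_trans (by norm_num) (hΛ k).1)
                  (fun k _ => (hΛ k).2)
            _ = lam ^ q := by rw [Finset.prod_const, Finset.card_range]
        obtain ⟨w, hw⟩ := mem_cantorK.1 hxK q
        have hsubball : cSquare Λ w q ⊆ s := by
          intro z hz
          apply hball
          rw [Metric.mem_ball, Complex.dist_eq]
          rw [mem_cSquare] at hz hw
          calc ‖z - x‖ ≤ |(z - x).re| + |(z - x).im| :=
                Complex.norm_le_abs_re_add_abs_im _
            _ ≤ sideLen Λ q + sideLen Λ q := by
                rw [Complex.sub_re, Complex.sub_im]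
                gcongr <;> rw [abs_le] <;> constructor <;> linarith [hz.1, hz.2.1, hz.2.2.1,
                  hz.2.2.2, hw.1, hw.2.1, hw.2.2.1, hw.2.2.2]
            _ < ε := by linarith
        have hcongr : cSquare Λ w q = cSquare Λ (ext3 fun i : Fin q => w i) q :=
          cSquare_congr fun k hk => by simp [ext3, hk]
        rw [Set.mem_iUnion]
        refine ⟨q, ?_⟩
        rw [Set.mem_iUnion]
        refine ⟨fun i : Fin q => w i, ?_⟩
        rw [Set.mem_iUnion]
        exact ⟨hcongr ▸ hsubball, hcongr ▸ hw⟩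
      · rintro ⟨hx, hxK⟩
        simp only [Set.mem_iUnion] at hx
        obtain ⟨q, v, hsub, hmem⟩ := hx
        exact ⟨hsub hmem, hxK⟩
  have hb : (Complex.measurableSpace : MeasurableSpace ℂ) = borel ℂ :=
    BorelSpace.measurable_eq
  have hle : (Complex.measurableSpace : MeasurableSpace ℂ) ≤ m' := by
    rw [hb]
    exact MeasurableSpace.generateFrom_le hopen
  exact hle s hs

end Measures

/-- Rotation by `u` about `c`. -/
def rotMap (u c : ℂ) : ℂ → ℂ := fun x => u * (x - c) + c

theorem image_square' {m n : ℕ} (hmn : m ≤ n) (wQ w : ℕ → Bool × Bool)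
    (h1 : c1 Λ (fun k => (w k).1) m = c1 Λ (fun k => (wQ k).1) m)
    (h2 : c1 Λ (fun k => (w k).2) m = c1 Λ (fun k => (wQ k).2) m)
    {u : ℂ} (hu : u = 1 ∨ u = -1 ∨ u = Complex.I ∨ u = -Complex.I) :
    ∃ w' : ℕ → Bool × Bool, (∀ k, k < m → w' k = w k) ∧
      rotMap u (squareCenter Λ wQ m) '' cSquare Λ w n = cSquare Λ w' n :=
  image_square hlam hΛ hmn wQ w h1 h2 hu

include hlam hΛ in
theorem isPiSystem_squares :
    IsPiSystem {S : Set ℂ | ∃ (n : ℕ) (w : ℕ → Bool × Bool), S = cSquare Λ w n} := by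
  rintro s ⟨n1, w1, rfl⟩ t ⟨n2, w2, rfl⟩ hne
  obtain ⟨z, hz1, hz2⟩ := hne
  rcases le_total n1 n2 with h | h
  · have hsub := (nested_of_inter hlam hΛ h hz2 hz1).2.2
    rw [Set.inter_eq_self_of_subset_right hsub]
    exact ⟨n2, w2, rfl⟩
  · have hsub := (nested_of_inter hlam hΛ h hz1 hz2).2.2
    rw [Set.inter_eq_self_of_subset_left hsub]
    exact ⟨n1, w1, rfl⟩

section MapInv

variable (μ : Measure ℂ) [IsProbabilityMeasure μ]
variable {u : ℂ} (hu : u = 1 ∨ u = -1 ∨ u = Complex.I ∨ u = -Complex.I)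

omit hlam hΛ in
include hu in
theorem u_ne_zero : u ≠ 0 := by
  rcases hu with rfl | rfl | rfl | rfl <;> simp [Complex.I_ne_zero]

omit hlam hΛ in
include hu in
theorem u_inv_mem : u⁻¹ = 1 ∨ u⁻¹ = -1 ∨ u⁻¹ = Complex.I ∨ u⁻¹ = -Complex.I := by
  rcases hu with rfl | rfl | rfl | rfl
  · left; exact inv_one
  · right; left; rw [inv_neg, inv_one]
  · right; right; right; exact Complex.inv_I
  · right; right; left; rw [inv_neg, Complex.inv_I, neg_neg]

omit hlam hΛ in
include hu in
theorem rot_li (c : ℂ) : ∀ x, rotMap u⁻¹ c (rotMap u c x) = x := fun x => by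
  show u⁻¹ * ((u * (x - c) + c) - c) + c = x
  linear_combination (x - c) * inv_mul_cancel₀ (u_ne_zero hu)

omit hlam hΛ in
include hu in
theorem rot_ri (c : ℂ) : ∀ x, rotMap u c (rotMap u⁻¹ c x) = x := fun x => by
  show u * ((u⁻¹ * (x - c) + c) - c) + c = x
  linear_combination (x - c) * mul_inv_cancel₀ (u_ne_zero hu)

omit hlam hΛ in
include hu in
theorem rot_preimage (c : ℂ) (S : Set ℂ) : rotMap u c ⁻¹' S = rotMap u⁻¹ c '' S :=
  (congrFun (Set.image_eq_preimage_of_inverse (rot_ri hu c) (rot_li hu c)) S).symm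

omit hlam hΛ in
theorem rot_measurable (c : ℂ) : Measurable (rotMap u c) :=
  ((measurable_id.sub_const c).const_mul u).add_const c

include hu in
theorem rot_image_Q (m : ℕ) (wQ : ℕ → Bool × Bool) :
    rotMap u (squareCenter Λ wQ m) '' cSquare Λ wQ m = cSquare Λ wQ m := by
  obtain ⟨w', hw', himg⟩ := image_square' hlam hΛ le_rfl wQ wQ rfl rfl hu
  rw [himg]
  exact cSquare_congr fun k hk => hw' k hk

include hu in
theorem rot_mem_Q (m : ℕ) (wQ : ℕ → Bool × Bool) {x : ℂ} (hx : x ∈ cSquare Λ wQ m) :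
    rotMap u (squareCenter Λ wQ m) x ∈ cSquare Λ wQ m :=
  rot_image_Q hlam hΛ hu m wQ ▸ Set.mem_image_of_mem _ hx

include hu in
theorem measure_map_inter (hμK : μ (cantorK Λ) = 1)
    (hμQ : ∀ (w : ℕ → Bool × Bool) (n : ℕ), μ (cSquare Λ w n) = (4 : ℝ≥0∞)⁻¹ ^ n)
    (m : ℕ) (wQ : ℕ → Bool × Bool) {s : Set ℂ} (hs : MeasurableSet s) :
    μ (rotMap u (squareCenter Λ wQ m) ⁻¹' s ∩ cSquare Λ wQ m)
      = μ (s ∩ cSquare Λ wQ m) := by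
  have hmeasg : Measurable (rotMap u (squareCenter Λ wQ m)) := rot_measurable _
  have hQmeas : MeasurableSet (cSquare Λ wQ m) := measurableSet_cSquare wQ m
  -- basic case of the Dynkin argument
  have hbasic : ∀ t ∈ {S : Set ℂ | ∃ (n : ℕ) (w : ℕ → Bool × Bool), S = cSquare Λ w n},
      μ (rotMap u (squareCenter Λ wQ m) ⁻¹' t ∩ cSquare Λ wQ m)
        = μ (t ∩ cSquare Λ wQ m) := by
    rintro t ⟨n', w', rfl⟩
    by_cases hne : (cSquare Λ w' n' ∩ cSquare Λ wQ m).Nonempty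
    · obtain ⟨z, hz1, hz2⟩ := hne
      rcases le_total n' m with hnm | hmn
      · have hQS : cSquare Λ wQ m ⊆ cSquare Λ w' n' :=
          (nested_of_inter hlam hΛ hnm hz2 hz1).2.2
        rw [Set.inter_eq_self_of_subset_right hQS,
          Set.inter_eq_self_of_subset_right
            (fun x hx => Set.mem_preimage.2 (hQS (rot_mem_Q hlam hΛ hu m wQ hx)))]
      · obtain ⟨e1, e2, hSQ⟩ := nested_of_inter hlam hΛ hmn hz1 hz2
        obtain ⟨w'', hw''agree, himg⟩ :=
          image_square' hlam hΛ hmn wQ w' e1 e2 (u_inv_mem hu)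
        have hpreS : rotMap u (squareCenter Λ wQ m) ⁻¹' cSquare Λ w' n'
            = cSquare Λ w'' n' := by
          rw [rot_preimage hu, himg]
        have hQeq : cSquare Λ w'' m = cSquare Λ wQ m := by
          apply cSquare_eq_of_c1
          · exact (c1_congr fun k hk => by rw [hw''agree k hk]).trans e1
          · exact (c1_congr fun k hk => by rw [hw''agree k hk]).trans e2
        have hsubQ : cSquare Λ w'' n' ⊆ cSquare Λ wQ m :=
          hQeq ▸ cSquare_mono hlam hΛ w'' hmn
        rw [hpreS, Set.inter_eq_self_of_subset_left hsubQ,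
          Set.inter_eq_self_of_subset_left hSQ, hμQ, hμQ]
    · rw [Set.not_nonempty_iff_eq_empty] at hne
      rw [hne]
      have hempty : rotMap u (squareCenter Λ wQ m) ⁻¹' cSquare Λ w' n'
          ∩ cSquare Λ wQ m = ∅ := by
        rw [Set.eq_empty_iff_forall_notMem]
        rintro x ⟨hx1, hx2⟩
        rw [Set.eq_empty_iff_forall_notMem] at hne
        exact hne (rotMap u (squareCenter Λ wQ m) x) ⟨hx1, rot_mem_Q hlam hΛ hu m wQ hx2⟩
      rw [hempty]
  have hgenle : MeasurableSpace.generateFrom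
      {S : Set ℂ | ∃ (n : ℕ) (w : ℕ → Bool × Bool), S = cSquare Λ w n}
      ≤ Complex.measurableSpace :=
    MeasurableSpace.generateFrom_le (by rintro t ⟨n, w, rfl⟩; exact measurableSet_cSquare w n)
  have hgen : ∀ t, MeasurableSet[MeasurableSpace.generateFrom
      {S : Set ℂ | ∃ (n : ℕ) (w : ℕ → Bool × Bool), S = cSquare Λ w n}] t →
      μ (rotMap u (squareCenter Λ wQ m) ⁻¹' t ∩ cSquare Λ wQ m)
        = μ (t ∩ cSquare Λ wQ m) := by
    intro t ht
    refine @MeasurableSpace.induction_on_inter ℂ (MeasurableSpace.generateFrom _)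
      (fun t _ => μ (rotMap u (squareCenter Λ wQ m) ⁻¹' t ∩ cSquare Λ wQ m)
        = μ (t ∩ cSquare Λ wQ m))
      {S : Set ℂ | ∃ (n : ℕ) (w : ℕ → Bool × Bool), S = cSquare Λ w n}
      rfl
      (isPiSystem_squares hlam hΛ) (by simp) hbasic ?_ ?_ t ht
    · intro t' ht' hC
      have htB : MeasurableSet t' := hgenle _ ht'
      have h1 : rotMap u (squareCenter Λ wQ m) ⁻¹' t'ᶜ ∩ cSquare Λ wQ m
          = cSquare Λ wQ m
            \ (rotMap u (squareCenter Λ wQ m) ⁻¹' t' ∩ cSquare Λ wQ m) := by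
        ext x
        simp only [Set.mem_inter_iff, Set.mem_preimage, Set.mem_compl_iff, Set.mem_diff]
        tauto
      have h2 : t'ᶜ ∩ cSquare Λ wQ m = cSquare Λ wQ m \ (t' ∩ cSquare Λ wQ m) := by
        ext x
        simp only [Set.mem_inter_iff, Set.mem_compl_iff, Set.mem_diff]
        tauto
      rw [h1, h2,
        measure_diff Set.inter_subset_right
          ((hmeasg htB).inter hQmeas).nullMeasurableSet (measure_ne_top μ _),
        measure_diff Set.inter_subset_right
          (htB.inter hQmeas).nullMeasurableSet (measure_ne_top μ _), hC]
    · intro f hdisj hfmeas hC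
      have hfB : ∀ i, MeasurableSet (f i) := fun i => hgenle _ (hfmeas i)
      rw [Set.preimage_iUnion, Set.iUnion_inter, Set.iUnion_inter,
        measure_iUnion
          (fun i j hij => (((hdisj hij).preimage _).mono
            Set.inter_subset_left Set.inter_subset_left))
          (fun i => (hmeasg (hfB i)).inter hQmeas),
        measure_iUnion
          (fun i j hij => ((hdisj hij).mono Set.inter_subset_left Set.inter_subset_left))
          (fun i => (hfB i).inter hQmeas)]
      exact tsum_congr hC
  have hKmeas : MeasurableSet (cantorK Λ) := measurableSet_cantorK
  have hKc : μ (cantorK Λ)ᶜ = 0 := by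
    rw [measure_compl hKmeas (measure_ne_top μ _), hμK, measure_univ]
    simp
  have hnullK : ∀ A : Set ℂ, μ A = μ (A ∩ cantorK Λ) := by
    intro A
    apply le_antisymm
    · calc μ A ≤ μ ((A ∩ cantorK Λ) ∪ (cantorK Λ)ᶜ) :=
          measure_mono (fun x hx => by
            by_cases h : x ∈ cantorK Λ
            · exact Or.inl ⟨hx, h⟩
            · exact Or.inr h)
        _ ≤ μ (A ∩ cantorK Λ) + μ (cantorK Λ)ᶜ := measure_union_le _ _
        _ = μ (A ∩ cantorK Λ) := by rw [hKc, add_zero]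
    · exact measure_mono Set.inter_subset_left
  have hgK : ∀ x, x ∈ cSquare Λ wQ m → x ∈ cantorK Λ →
      rotMap u (squareCenter Λ wQ m) x ∈ cantorK Λ := by
    intro x hxQ hxK
    rw [mem_cantorK] at hxK ⊢
    intro n
    rcases le_total n m with h | h
    · exact ⟨wQ, cSquare_mono hlam hΛ wQ h (rot_mem_Q hlam hΛ hu m wQ hxQ)⟩
    · obtain ⟨w, hw⟩ := hxK n
      obtain ⟨e1, e2, _⟩ := nested_of_inter hlam hΛ h hw hxQ
      obtain ⟨w', _, himg⟩ := image_square' hlam hΛ h wQ w e1 e2 hu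
      exact ⟨w', himg ▸ Set.mem_image_of_mem _ hw⟩
  obtain ⟨t, htgen, htK⟩ := exists_gen_of_measurable hlam hΛ s hs
  have e1 : rotMap u (squareCenter Λ wQ m) ⁻¹' s ∩ cSquare Λ wQ m ∩ cantorK Λ
      = rotMap u (squareCenter Λ wQ m) ⁻¹' t ∩ cSquare Λ wQ m ∩ cantorK Λ := by
    ext x
    simp only [Set.mem_inter_iff, Set.mem_preimage]
    constructor
    · rintro ⟨⟨hx1, hx2⟩, hx3⟩
      have hgxK := hgK x hx2 hx3
      have hmem : rotMap u (squareCenter Λ wQ m) x ∈ t ∩ cantorK Λ :=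
        htK ▸ (⟨hx1, hgxK⟩ : rotMap u (squareCenter Λ wQ m) x ∈ s ∩ cantorK Λ)
      exact ⟨⟨hmem.1, hx2⟩, hx3⟩
    · rintro ⟨⟨hx1, hx2⟩, hx3⟩
      have hgxK := hgK x hx2 hx3
      have hmem : rotMap u (squareCenter Λ wQ m) x ∈ s ∩ cantorK Λ :=
        htK.symm ▸ (⟨hx1, hgxK⟩ : rotMap u (squareCenter Λ wQ m) x ∈ t ∩ cantorK Λ)
      exact ⟨⟨hmem.1, hx2⟩, hx3⟩
  have e2 : s ∩ cSquare Λ wQ m ∩ cantorK Λ = t ∩ cSquare Λ wQ m ∩ cantorK Λ := by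
    ext x
    simp only [Set.mem_inter_iff]
    constructor
    · rintro ⟨⟨hx1, hx2⟩, hx3⟩
      exact ⟨⟨((Set.ext_iff.1 htK x).1 ⟨hx1, hx3⟩).1, hx2⟩, hx3⟩
    · rintro ⟨⟨hx1, hx2⟩, hx3⟩
      exact ⟨⟨((Set.ext_iff.1 htK x).2 ⟨hx1, hx3⟩).1, hx2⟩, hx3⟩
  calc μ (rotMap u (squareCenter Λ wQ m) ⁻¹' s ∩ cSquare Λ wQ m)
      = μ (rotMap u (squareCenter Λ wQ m) ⁻¹' s ∩ cSquare Λ wQ m ∩ cantorK Λ) := hnullK _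
    _ = μ (rotMap u (squareCenter Λ wQ m) ⁻¹' t ∩ cSquare Λ wQ m ∩ cantorK Λ) := by rw [e1]
    _ = μ (rotMap u (squareCenter Λ wQ m) ⁻¹' t ∩ cSquare Λ wQ m) := (hnullK _).symm
    _ = μ (t ∩ cSquare Λ wQ m) := hgen t htgen
    _ = μ (t ∩ cSquare Λ wQ m ∩ cantorK Λ) := hnullK _
    _ = μ (s ∩ cSquare Λ wQ m ∩ cantorK Λ) := by rw [e2]
    _ = μ (s ∩ cSquare Λ wQ m) := (hnullK _).symm

include hu in
theorem map_restrict (hμK : μ (cantorK Λ) = 1)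
    (hμQ : ∀ (w : ℕ → Bool × Bool) (n : ℕ), μ (cSquare Λ w n) = (4 : ℝ≥0∞)⁻¹ ^ n)
    (m : ℕ) (wQ : ℕ → Bool × Bool) :
    Measure.map (rotMap u (squareCenter Λ wQ m)) (μ.restrict (cSquare Λ wQ m))
      = μ.restrict (cSquare Λ wQ m) := by
  apply Measure.ext
  intro s hs
  rw [Measure.map_apply (rot_measurable _) hs, Measure.restrict_apply hs,
    Measure.restrict_apply (rot_measurable (u := u) (squareCenter Λ wQ m) hs)]
  exact measure_map_inter hlam hΛ μ hu hμK hμQ m wQ hs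

include hu in
theorem Srel_image (hμK : μ (cantorK Λ) = 1)
    (hμQ : ∀ (w : ℕ → Bool × Bool) (n : ℕ), μ (cSquare Λ w n) = (4 : ℝ≥0∞)⁻¹ ^ n)
    {m n : ℕ} (hmn : m ≤ n) (wQ wR : ℕ → Bool × Bool)
    (hsub : cSquare Λ wR n ⊆ cSquare Λ wQ m) :
    Srel μ (cSquare Λ wQ m) (rotMap u (squareCenter Λ wQ m) '' cSquare Λ wR n)
      = u⁻¹ * Srel μ (cSquare Λ wQ m) (cSquare Λ wR n) := by
  obtain ⟨z0, hz0⟩ := cSquare_nonempty hΛ wR n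
  obtain ⟨e1, e2, -⟩ := nested_of_inter hlam hΛ hmn hz0 (hsub hz0)
  obtain ⟨w', hw'agree, himg⟩ := image_square' hlam hΛ hmn wQ wR e1 e2 hu
  have hmeasg : Measurable (rotMap u (squareCenter Λ wQ m)) := rot_measurable _
  have hQmeas : MeasurableSet (cSquare Λ wQ m) := measurableSet_cSquare wQ m
  have hRmeas : MeasurableSet (cSquare Λ wR n) := measurableSet_cSquare wR n
  have hR'meas : MeasurableSet (cSquare Λ w' n) := measurableSet_cSquare w' n
  have hR'Q : cSquare Λ w' n ⊆ cSquare Λ wQ m := by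
    have hQeq : cSquare Λ w' m = cSquare Λ wQ m := by
      apply cSquare_eq_of_c1
      · exact (c1_congr fun k hk => by rw [hw'agree k hk]).trans e1
      · exact (c1_congr fun k hk => by rw [hw'agree k hk]).trans e2
    exact hQeq ▸ cSquare_mono hlam hΛ w' hmn
  -- injectivity transfer
  have hinj : ∀ {x : ℂ},
      rotMap u (squareCenter Λ wQ m) x ∈ cSquare Λ w' n → x ∈ cSquare Λ wR n := by
    intro x hx
    rw [← himg] at hx
    obtain ⟨y, hy, hyx⟩ := hx
    have : y = x := by
      have h1 := rot_li hu (squareCenter Λ wQ m) y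
      have h2 := rot_li hu (squareCenter Λ wQ m) x
      rw [hyx] at h1
      rw [← h1, h2]
    exact this ▸ hy
  have hfwd : ∀ {x : ℂ},
      x ∈ cSquare Λ wR n → rotMap u (squareCenter Λ wQ m) x ∈ cSquare Λ w' n := by
    intro x hx
    rw [← himg]
    exact Set.mem_image_of_mem _ hx
  -- pushforward identities
  have hrestr1 : Measure.map (rotMap u (squareCenter Λ wQ m)) (μ.restrict (cSquare Λ wR n))
      = μ.restrict (cSquare Λ w' n) := by
    apply Measure.ext
    intro s hs
    rw [Measure.map_apply hmeasg hs, Measure.restrict_apply (hmeasg hs),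
      Measure.restrict_apply hs]
    have hset : rotMap u (squareCenter Λ wQ m) ⁻¹' s ∩ cSquare Λ wR n
        = rotMap u (squareCenter Λ wQ m) ⁻¹' (s ∩ cSquare Λ w' n) ∩ cSquare Λ wQ m := by
      ext x
      simp only [Set.mem_inter_iff, Set.mem_preimage]
      constructor
      · rintro ⟨h1, h2⟩
        exact ⟨⟨h1, hfwd h2⟩, hsub h2⟩
      · rintro ⟨⟨h1, h2⟩, h3⟩
        exact ⟨h1, hinj h2⟩
    rw [hset, measure_map_inter hlam hΛ μ hu hμK hμQ m wQ (hs.inter hR'meas),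
      Set.inter_eq_self_of_subset_left (Set.inter_subset_right.trans hR'Q)]
  have hrestr2 : Measure.map (rotMap u (squareCenter Λ wQ m))
        (μ.restrict (cSquare Λ wQ m \ cSquare Λ wR n))
      = μ.restrict (cSquare Λ wQ m \ cSquare Λ w' n) := by
    apply Measure.ext
    intro s hs
    rw [Measure.map_apply hmeasg hs, Measure.restrict_apply (hmeasg hs),
      Measure.restrict_apply hs]
    have hset : rotMap u (squareCenter Λ wQ m) ⁻¹' s ∩ (cSquare Λ wQ m \ cSquare Λ wR n)
        = rotMap u (squareCenter Λ wQ m) ⁻¹' (s ∩ (cSquare Λ wQ m \ cSquare Λ w' n))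
          ∩ cSquare Λ wQ m := by
      ext x
      simp only [Set.mem_inter_iff, Set.mem_preimage, Set.mem_diff]
      constructor
      · rintro ⟨h1, h2, h3⟩
        exact ⟨⟨h1, rot_mem_Q hlam hΛ hu m wQ h2, fun hc => h3 (hinj hc)⟩, h2⟩
      · rintro ⟨⟨h1, h2, h3⟩, h4⟩
        exact ⟨h1, h4, fun hc => h3 (hfwd hc)⟩
    rw [hset, measure_map_inter hlam hΛ μ hu hμK hμQ m wQ
        (hs.inter (hQmeas.diff hR'meas)),
      Set.inter_eq_self_of_subset_left (Set.inter_subset_right.trans Set.diff_subset)]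
  -- masses agree
  have hmass : μ (cSquare Λ w' n) = μ (cSquare Λ wR n) := by rw [hμQ, hμQ]
  -- inner kernel measurability
  have hker : StronglyMeasurable
      (fun z : ℂ => ∫ y in cSquare Λ wQ m \ cSquare Λ w' n, (z - y)⁻¹ ∂μ) :=
    ((measurable_fst.sub measurable_snd).inv.stronglyMeasurable).integral_prod_right'
  -- main computation
  rw [Srel, Srel, himg]
  rw [setAverage_eq, setAverage_eq, measureReal_def, measureReal_def, hmass]
  have houter : ∫ z in cSquare Λ w' n,
        (∫ y in cSquare Λ wQ m \ cSquare Λ w' n, (z - y)⁻¹ ∂μ) ∂μ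
      = ∫ z in cSquare Λ wR n,
          (∫ y in cSquare Λ wQ m \ cSquare Λ w' n,
            (rotMap u (squareCenter Λ wQ m) z - y)⁻¹ ∂μ) ∂μ := by
    rw [← hrestr1, integral_map hmeasg.aemeasurable hker.aestronglyMeasurable]
  have hinner : ∀ z : ℂ,
      (∫ y in cSquare Λ wQ m \ cSquare Λ w' n,
        (rotMap u (squareCenter Λ wQ m) z - y)⁻¹ ∂μ)
      = u⁻¹ * ∫ y in cSquare Λ wQ m \ cSquare Λ wR n, (z - y)⁻¹ ∂μ := by
    intro z
    rw [← hrestr2]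
    rw [integral_map (f := fun y => (rotMap u (squareCenter Λ wQ m) z - y)⁻¹)
      hmeasg.aemeasurable
      (Measurable.aestronglyMeasurable (by exact (measurable_const.sub measurable_id).inv))]
    rw [← integral_const_mul]
    refine setIntegral_congr_fun (hQmeas.diff hRmeas) fun y _ => ?_
    have harg : rotMap u (squareCenter Λ wQ m) z - rotMap u (squareCenter Λ wQ m) y
        = u * (z - y) := by
      show (u * (z - squareCenter Λ wQ m) + squareCenter Λ wQ m)
        - (u * (y - squareCenter Λ wQ m) + squareCenter Λ wQ m) = u * (z - y)
      ring
    rw [harg, mul_inv]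
  rw [houter]
  have : ∫ z in cSquare Λ wR n,
        (∫ y in cSquare Λ wQ m \ cSquare Λ w' n,
          (rotMap u (squareCenter Λ wQ m) z - y)⁻¹ ∂μ) ∂μ
      = u⁻¹ * ∫ z in cSquare Λ wR n,
          (∫ y in cSquare Λ wQ m \ cSquare Λ wR n, (z - y)⁻¹ ∂μ) ∂μ := by
    rw [← integral_const_mul]
    exact setIntegral_congr_fun hRmeas fun z _ => hinner z
  rw [this, mul_smul_comm]

end MapInv

end CantorAux

open CantorAux

/-- For all indices `1 ≤ j,k ≤ 8`, if `f = f_{j,k}` is a composition of two of the symmetries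
`f₁, f₂, f₃` mapping the octant `σ_j` onto the octant `σ_k`, then there is a sign
`ε_{j,k} = ±1` (depending only on `j` and `k`) such that for every pair of squares `R ⊆ Q`
of `𝒟` one has `S_{Q, f_{Q,j,k}(R)} = ε_{j,k} f_{j,k}(S_{Q,R})`, where
`f_{Q,j,k}(x) = f_{j,k}(x - c_Q) + c_Q`; in particular
`|S_{Q, f_{Q,j,k}(R)}| = |S_{Q,R}|`. -/
theorem relative_martingale_symmetry (Λ : ℕ → ℝ) (lam : ℝ) (hlam : lam < 1 / 2)
    (hΛ : ∀ n, 1 / 4 ≤ Λ n ∧ Λ n ≤ lam)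
    (μ : Measure ℂ) [IsProbabilityMeasure μ]
    (hμK : μ (cantorK Λ) = 1)
    (hμQ : ∀ (w : ℕ → Bool × Bool) (n : ℕ), μ (cSquare Λ w n) = (4 : ℝ≥0∞)⁻¹ ^ n) :
    ∀ j k : ℕ, 1 ≤ j → j ≤ 8 → 1 ≤ k → k ≤ 8 →
    ∀ f : ℂ → ℂ,
      (∃ p ∈ ({sym1, _root_.sym2, sym3} : Set (ℂ → ℂ)), ∃ q ∈ ({sym1, _root_.sym2, sym3} : Set (ℂ → ℂ)),
        f = p ∘ q) →
      f '' octant j = octant k →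
      ∃ e : ℝ, (e = 1 ∨ e = -1) ∧
        ∀ (m n : ℕ), m < n → ∀ (wQ wR : ℕ → Bool × Bool),
          cSquare Λ wR n ⊆ cSquare Λ wQ m →
          Srel μ (cSquare Λ wQ m)
              ((fun x => f (x - squareCenter Λ wQ m) + squareCenter Λ wQ m) ''
                cSquare Λ wR n)
            = (e : ℂ) * f (Srel μ (cSquare Λ wQ m) (cSquare Λ wR n)) ∧
          ‖Srel μ (cSquare Λ wQ m)
              ((fun x => f (x - squareCenter Λ wQ m) + squareCenter Λ wQ m) ''
                cSquare Λ wR n)‖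
            = ‖Srel μ (cSquare Λ wQ m) (cSquare Λ wR n)‖ := by
  intro j k _ _ _ _ f hf _
  obtain ⟨u, hu, hfu⟩ : ∃ u : ℂ,
      (u = 1 ∨ u = -1 ∨ u = Complex.I ∨ u = -Complex.I) ∧ f = fun z => u * z := by
    obtain ⟨p, hp, q, hq, rfl⟩ := hf
    simp only [Set.mem_insert_iff, Set.mem_singleton_iff] at hp hq
    rcases hp with rfl | rfl | rfl <;> rcases hq with rfl | rfl | rfl
    · exact ⟨1, Or.inl rfl, funext fun z => by
        simp [sym1, Function.comp, map_neg, Complex.conj_conj]⟩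
    · exact ⟨-1, Or.inr (Or.inl rfl), funext fun z => by
        simp [sym1, _root_.sym2, Function.comp, Complex.conj_conj]⟩
    · exact ⟨Complex.I, Or.inr (Or.inr (Or.inl rfl)), funext fun z => by
        simp [sym1, sym3, Function.comp, map_mul, Complex.conj_conj, Complex.conj_I]⟩
    · exact ⟨-1, Or.inr (Or.inl rfl), funext fun z => by
        simp [sym1, _root_.sym2, Function.comp, map_neg, Complex.conj_conj]⟩
    · exact ⟨1, Or.inl rfl, funext fun z => by
        simp [_root_.sym2, Function.comp, Complex.conj_conj]⟩
    · exact ⟨-Complex.I, Or.inr (Or.inr (Or.inr rfl)), funext fun z => by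
        simp [_root_.sym2, sym3, Function.comp, map_mul, Complex.conj_conj, Complex.conj_I]⟩
    · exact ⟨-Complex.I, Or.inr (Or.inr (Or.inr rfl)), funext fun z => by
        simp [sym1, sym3, Function.comp, map_neg, Complex.conj_conj]⟩
    · exact ⟨Complex.I, Or.inr (Or.inr (Or.inl rfl)), funext fun z => by
        simp [_root_.sym2, sym3, Function.comp, Complex.conj_conj]⟩
    · exact ⟨1, Or.inl rfl, funext fun z => by
        simp only [sym3, Function.comp, map_mul, Complex.conj_conj, Complex.conj_I, one_mul]
        linear_combination (-z) * Complex.I_mul_I⟩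
  have hmain : ∀ (m n : ℕ), m ≤ n → ∀ (wQ wR : ℕ → Bool × Bool),
      cSquare Λ wR n ⊆ cSquare Λ wQ m →
      Srel μ (cSquare Λ wQ m)
          ((fun x => f (x - squareCenter Λ wQ m) + squareCenter Λ wQ m) '' cSquare Λ wR n)
        = u⁻¹ * Srel μ (cSquare Λ wQ m) (cSquare Λ wR n) := by
    intro m n hmn wQ wR hsub
    have hmapeq : (fun x => f (x - squareCenter Λ wQ m) + squareCenter Λ wQ m)
        = rotMap u (squareCenter Λ wQ m) := by
      rw [hfu]; rfl
    rw [hmapeq]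
    exact Srel_image hlam hΛ μ hu hμK hμQ hmn wQ wR hsub
  have hnorm : ‖u⁻¹‖ = 1 := by
    rcases hu with rfl | rfl | rfl | rfl <;>
      simp [inv_neg, Complex.inv_I, Complex.norm_I]
  rcases hu with rfl | rfl | rfl | rfl
  · refine ⟨1, Or.inl rfl, fun m n hmn wQ wR hsub => ?_⟩
    have h := hmain m n hmn.le wQ wR hsub
    constructor
    · rw [h, hfu]; simp
    · rw [h]; simp
  · refine ⟨1, Or.inl rfl, fun m n hmn wQ wR hsub => ?_⟩
    have h := hmain m n hmn.le wQ wR hsub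
    constructor
    · rw [h, hfu]; simp [inv_neg]
    · rw [h]; simp [inv_neg]
  · refine ⟨-1, Or.inr rfl, fun m n hmn wQ wR hsub => ?_⟩
    have h := hmain m n hmn.le wQ wR hsub
    constructor
    · rw [h, hfu, Complex.inv_I]; push_cast; ring
    · rw [h, norm_mul, Complex.inv_I, norm_neg, Complex.norm_I, one_mul]
  · refine ⟨-1, Or.inr rfl, fun m n hmn wQ wR hsub => ?_⟩
    have h := hmain m n hmn.le wQ wR hsub
    constructor
    · rw [h, hfu, inv_neg, Complex.inv_I, neg_neg]; push_cast; ring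
    · rw [h, norm_mul, inv_neg, Complex.inv_I, neg_neg, Complex.norm_I, one_mul]
end
end

section
/- Let 0 < ε < c < 1 and for each n = 0, 1, 2, … let F_n be a family of pairwise disjoint squares in D satisfying: (a) F_0 = {Q_0}; (b) if Q ∈ F_{n+1} then there exists Q̃ ∈ F_n with Q ⊂ Q̃ and μ(Q) ≤ ε μ(Q̃); (c) if Q ∈ F_n then Σ_{R ⊂ Q, R ∈ F_{n+1}} μ(R) ≥ c μ(Q). Let E = ∩_n ∪_{Q ∈ F_n} Q. Then the Hausdorff dimension of E is at least 1 − log c / log ε. -/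
open MeasureTheory Filter Set Topology
open scoped ENNReal
open scoped NNReal

set_option linter.unusedSectionVars false
set_option linter.unusedVariables false

noncomputable section

namespace Hung

attribute [local instance] Classical.propDecidable

variable {Λ : ℕ → ℝ} {lam : ℝ}

def cX (Λ : ℕ → ℝ) (w : ℕ → Bool × Bool) (n : ℕ) : ℝ :=
  ∑ k ∈ Finset.range n, (if (w k).1 then sideLen Λ k - sideLen Λ (k + 1) else 0)

def cY (Λ : ℕ → ℝ) (w : ℕ → Bool × Bool) (n : ℕ) : ℝ :=
  ∑ k ∈ Finset.range n, (if (w k).2 then sideLen Λ k - sideLen Λ (k + 1) else 0)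

lemma cornerPt_re (w : ℕ → Bool × Bool) (n : ℕ) : (cornerPt Λ w n).re = cX Λ w n := by
  rw [cornerPt, Complex.re_sum, cX]
  refine Finset.sum_congr rfl fun k _ => ?_
  simp [Complex.add_re, Complex.mul_re]

lemma cornerPt_im (w : ℕ → Bool × Bool) (n : ℕ) : (cornerPt Λ w n).im = cY Λ w n := by
  rw [cornerPt, Complex.im_sum, cY]
  refine Finset.sum_congr rfl fun k _ => ?_
  simp [Complex.add_im, Complex.mul_im]

lemma mem_cSquare {z : ℂ} {w : ℕ → Bool × Bool} {n : ℕ} :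
    z ∈ cSquare Λ w n ↔ (cX Λ w n ≤ z.re ∧ z.re ≤ cX Λ w n + sideLen Λ n ∧
      cY Λ w n ≤ z.im ∧ z.im ≤ cY Λ w n + sideLen Λ n) := by
  rw [cSquare, Set.mem_setOf_eq, cornerPt_re, cornerPt_im]

section Basic
variable (h4 : ∀ n, 1 / 4 ≤ Λ n) (hL : ∀ n, Λ n ≤ lam) (hlam : lam < 1 / 2)

lemma sideLen_zero : sideLen Λ 0 = 1 := by simp [sideLen]

lemma sideLen_succ (n : ℕ) : sideLen Λ (n + 1) = sideLen Λ n * Λ n :=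
  Finset.prod_range_succ _ _

include h4 in
lemma sideLen_pos (n : ℕ) : 0 < sideLen Λ n := by
  induction n with
  | zero => simp [sideLen_zero]
  | succ n ih => rw [sideLen_succ]; exact mul_pos ih (lt_of_lt_of_le (by norm_num) (h4 n))

include h4 hL hlam in
lemma sideLen_succ_le (n : ℕ) : sideLen Λ (n + 1) ≤ lam * sideLen Λ n := by
  rw [sideLen_succ, mul_comm]
  exact mul_le_mul_of_nonneg_right (hL n) (sideLen_pos h4 n).le

include h4 hL hlam in
lemma sideLen_anti {m n : ℕ} (h : m ≤ n) : sideLen Λ n ≤ sideLen Λ m := by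
  induction n with
  | zero => simp_all
  | succ n ih =>
    rcases Nat.lt_or_ge m (n+1) with hm | hm
    · calc sideLen Λ (n+1) ≤ lam * sideLen Λ n := sideLen_succ_le h4 hL hlam n
        _ ≤ 1 * sideLen Λ n := by
            apply mul_le_mul_of_nonneg_right (by linarith) (sideLen_pos h4 n).le
        _ = sideLen Λ n := one_mul _
        _ ≤ sideLen Λ m := ih (Nat.lt_succ_iff.mp hm)
    · have : m = n + 1 := le_antisymm h hm
      simp [this]

include h4 hL hlam in
lemma sideLen_le_pow (n : ℕ) : sideLen Λ n ≤ lam ^ n := by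
  induction n with
  | zero => simp [sideLen_zero]
  | succ n ih =>
    calc sideLen Λ (n+1) ≤ lam * sideLen Λ n := sideLen_succ_le h4 hL hlam n
      _ ≤ lam * lam ^ n := by
          apply mul_le_mul_of_nonneg_left ih (by linarith [h4 0, hL 0])
      _ = lam ^ (n+1) := by ring

include h4 in
lemma pow_le_sideLen (n : ℕ) : (1/4 : ℝ) ^ n ≤ sideLen Λ n := by
  induction n with
  | zero => simp [sideLen_zero]
  | succ n ih =>
    rw [pow_succ, sideLen_succ]
    apply mul_le_mul ih (h4 n) (by norm_num) (sideLen_pos h4 n).le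

include h4 hL hlam in
lemma sideLen_tendsto : Tendsto (fun n => sideLen Λ n) atTop (nhds 0) := by
  have h0 : (0:ℝ) ≤ lam := le_trans (by norm_num) (le_trans (h4 0) (hL 0))
  have := tendsto_pow_atTop_nhds_zero_of_lt_one h0 (by linarith : lam < 1)
  refine squeeze_zero (fun n => (sideLen_pos h4 n).le) (fun n => sideLen_le_pow h4 hL hlam n) this

end Basic

lemma cSquare_congr {w w' : ℕ → Bool × Bool} {n : ℕ} (h : ∀ k < n, w k = w' k) :
    cSquare Λ w n = cSquare Λ w' n := by
  have hx : cX Λ w n = cX Λ w' n :=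
    Finset.sum_congr rfl fun k hk => by rw [h k (Finset.mem_range.mp hk)]
  have hy : cY Λ w n = cY Λ w' n :=
    Finset.sum_congr rfl fun k hk => by rw [h k (Finset.mem_range.mp hk)]
  ext z; rw [mem_cSquare, mem_cSquare, hx, hy]

section Geometry
variable (h4 : ∀ n, 1 / 4 ≤ Λ n) (hL : ∀ n, Λ n ≤ lam) (hlam : lam < 1 / 2)

include h4 hL hlam in
lemma cSquare_succ_subset (w : ℕ → Bool × Bool) (n : ℕ) :
    cSquare Λ w (n + 1) ⊆ cSquare Λ w n := by
  have hs1 : 0 < sideLen Λ (n+1) := sideLen_pos h4 _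
  have hss : sideLen Λ (n+1) ≤ sideLen Λ n := sideLen_anti h4 hL hlam (Nat.le_succ n)
  have hxt : ∀ t : ℝ, (t = 0 ∨ t = sideLen Λ n - sideLen Λ (n+1)) →
      0 ≤ t ∧ t + sideLen Λ (n+1) ≤ sideLen Λ n := by
    rintro t (rfl | rfl) <;> constructor <;> linarith
  intro z hz
  rw [mem_cSquare] at hz ⊢
  have hcx : cX Λ w (n+1) = cX Λ w n + (if (w n).1 then sideLen Λ n - sideLen Λ (n+1) else 0) :=
    Finset.sum_range_succ _ _
  have hcy : cY Λ w (n+1) = cY Λ w n + (if (w n).2 then sideLen Λ n - sideLen Λ (n+1) else 0) :=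
    Finset.sum_range_succ _ _
  obtain ⟨hx0, hxt1⟩ :=
    hxt (if (w n).1 then sideLen Λ n - sideLen Λ (n+1) else 0)
      (by by_cases h : (w n).1 <;> simp [h])
  obtain ⟨hy0, hyt1⟩ :=
    hxt (if (w n).2 then sideLen Λ n - sideLen Λ (n+1) else 0)
      (by by_cases h : (w n).2 <;> simp [h])
  rw [hcx, hcy] at hz
  obtain ⟨h1, h2, h3, h4'⟩ := hz
  refine ⟨by linarith, by linarith, by linarith, by linarith⟩

include h4 hL hlam in
lemma cSquare_subset_of_le (w : ℕ → Bool × Bool) {m n : ℕ} (h : m ≤ n) :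
    cSquare Λ w n ⊆ cSquare Λ w m := by
  induction n with
  | zero => simp_all
  | succ n ih =>
    rcases Nat.lt_or_ge m (n+1) with hm | hm
    · exact (cSquare_succ_subset h4 hL hlam w n).trans (ih (Nat.lt_succ_iff.mp hm))
    · have : m = n + 1 := le_antisymm h hm
      simp [this]

end Geometry


lemma cSquare_eq_preimage (w : ℕ → Bool × Bool) (n : ℕ) :
    cSquare Λ w n = Complex.re ⁻¹' (Set.Icc (cX Λ w n) (cX Λ w n + sideLen Λ n)) ∩
      Complex.im ⁻¹' (Set.Icc (cY Λ w n) (cY Λ w n + sideLen Λ n)) := by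
  ext z
  rw [mem_cSquare]
  simp only [Set.mem_inter_iff, Set.mem_preimage, Set.mem_Icc]
  tauto

lemma isClosed_cSquare (w : ℕ → Bool × Bool) (n : ℕ) : IsClosed (cSquare Λ w n) := by
  rw [cSquare_eq_preimage]
  exact ((isClosed_Icc.preimage Complex.continuous_re).inter
    (isClosed_Icc.preimage Complex.continuous_im))

lemma measurableSet_cSquare (w : ℕ → Bool × Bool) (n : ℕ) :
    MeasurableSet (cSquare Λ w n) := (isClosed_cSquare w n).measurableSet

section Cpt
variable (h4 : ∀ n, 1 / 4 ≤ Λ n) (hL : ∀ n, Λ n ≤ lam) (hlam : lam < 1 / 2)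

include h4 in
lemma cornerPt_mem_cSquare (w : ℕ → Bool × Bool) (n : ℕ) :
    cornerPt Λ w n ∈ cSquare Λ w n := by
  rw [cSquare]
  have := (sideLen_pos h4 n).le
  constructor
  · rfl
  refine ⟨by linarith, le_refl _, by linarith⟩

include h4 in
lemma cSquare_nonempty (w : ℕ → Bool × Bool) (n : ℕ) : (cSquare Λ w n).Nonempty :=
  ⟨_, cornerPt_mem_cSquare h4 w n⟩

include h4 in
lemma isCompact_cSquare (w : ℕ → Bool × Bool) (n : ℕ) : IsCompact (cSquare Λ w n) := by
  rw [Metric.isCompact_iff_isClosed_bounded]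
  refine ⟨isClosed_cSquare w n, ?_⟩
  rw [Metric.isBounded_iff_subset_closedBall (cornerPt Λ w n)]
  refine ⟨2 * sideLen Λ n, fun z hz => ?_⟩
  rw [Metric.mem_closedBall, Complex.dist_eq]
  have h1 : ‖z - cornerPt Λ w n‖ ≤ |(z - cornerPt Λ w n).re| +
      |(z - cornerPt Λ w n).im| := Complex.norm_le_abs_re_add_abs_im _
  rw [Complex.sub_re, Complex.sub_im, cornerPt_re, cornerPt_im] at h1
  rw [mem_cSquare] at hz
  have hs := (sideLen_pos h4 n).le
  have h2 : |z.re - cX Λ w n| ≤ sideLen Λ n := by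
    rw [abs_le]; constructor <;> [linarith [hz.1]; linarith [hz.2.1]]
  have h3 : |z.im - cY Λ w n| ≤ sideLen Λ n := by
    rw [abs_le]; constructor <;> [linarith [hz.2.2.1]; linarith [hz.2.2.2]]
  linarith

include h4 hL hlam in
/-- quantitative separation: if two words first differ at position `j < n`, then the two
generation-`n` squares are `(1-2λ)·s j`-separated. -/
lemma cSquare_separated {w w' : ℕ → Bool × Bool} {j n : ℕ} (hjn : j < n)
    (hagree : ∀ i < j, w i = w' i) (hdiff : w j ≠ w' j)
    {z z' : ℂ} (hz : z ∈ cSquare Λ w n) (hz' : z' ∈ cSquare Λ w' n) :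
    (1 - 2 * lam) * sideLen Λ j ≤ dist z z' := by
  have hz1 : z ∈ cSquare Λ w (j+1) := cSquare_subset_of_le h4 hL hlam w hjn hz
  have hz1' : z' ∈ cSquare Λ w' (j+1) := cSquare_subset_of_le h4 hL hlam w' hjn hz'
  rw [mem_cSquare] at hz1 hz1'
  have hsj : 0 < sideLen Λ j := sideLen_pos h4 j
  have hgap : (1 - 2*lam) * sideLen Λ j ≤ sideLen Λ j - 2 * sideLen Λ (j+1) := by
    have h1 : sideLen Λ (j+1) ≤ lam * sideLen Λ j := sideLen_succ_le h4 hL hlam j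
    nlinarith
  have hcx : cX Λ w j = cX Λ w' j :=
    Finset.sum_congr rfl fun k hk => by rw [hagree k (Finset.mem_range.mp hk)]
  have hcy : cY Λ w j = cY Λ w' j :=
    Finset.sum_congr rfl fun k hk => by rw [hagree k (Finset.mem_range.mp hk)]
  have hXsucc : ∀ v : ℕ → Bool × Bool, cX Λ v (j+1) =
      cX Λ v j + (if (v j).1 then sideLen Λ j - sideLen Λ (j+1) else 0) :=
    fun v => Finset.sum_range_succ _ _
  have hYsucc : ∀ v : ℕ → Bool × Bool, cY Λ v (j+1) =
      cY Λ v j + (if (v j).2 then sideLen Λ j - sideLen Λ (j+1) else 0) :=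
    fun v => Finset.sum_range_succ _ _
  have hdd : (w j).1 ≠ (w' j).1 ∨ (w j).2 ≠ (w' j).2 := by
    by_contra hcon
    push_neg at hcon
    exact hdiff (Prod.ext hcon.1 hcon.2)
  have hre : dist z z' = ‖z - z'‖ := Complex.dist_eq z z'
  have habsre : |(z - z').re| ≤ ‖z - z'‖ := Complex.abs_re_le_norm _
  have habsim : |(z - z').im| ≤ ‖z - z'‖ := Complex.abs_im_le_norm _
  rw [Complex.sub_re] at habsre
  rw [Complex.sub_im] at habsim
  rcases hdd with hd1 | hd2
  · have b1 := hz1.1; have b2 := hz1.2.1; have b3 := hz1'.1; have b4 := hz1'.2.1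
    rw [hXsucc w] at b1 b2
    rw [hXsucc w', ← hcx] at b3 b4
    have hsep : sideLen Λ j - 2 * sideLen Λ (j+1) ≤ |z.re - z'.re| := by
      cases hb : (w j).1 <;> cases hb' : (w' j).1 <;>
        rw [hb] at b1 b2 <;> rw [hb'] at b3 b4 <;>
        simp only [Bool.false_eq_true, if_false, if_true] at b1 b2 b3 b4
      · exact absurd (hb.trans hb'.symm) hd1
      · rw [abs_sub_comm]
        refine le_trans ?_ (le_abs_self _)
        linarith
      · refine le_trans ?_ (le_abs_self _)
        linarith
      · exact absurd (hb.trans hb'.symm) hd1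
    calc (1-2*lam) * sideLen Λ j ≤ sideLen Λ j - 2 * sideLen Λ (j+1) := hgap
      _ ≤ |z.re - z'.re| := hsep
      _ ≤ ‖z - z'‖ := habsre
      _ = dist z z' := hre.symm
  · have b1 := hz1.2.2.1; have b2 := hz1.2.2.2; have b3 := hz1'.2.2.1; have b4 := hz1'.2.2.2
    rw [hYsucc w] at b1 b2
    rw [hYsucc w', ← hcy] at b3 b4
    have hsep : sideLen Λ j - 2 * sideLen Λ (j+1) ≤ |z.im - z'.im| := by
      cases hb : (w j).2 <;> cases hb' : (w' j).2 <;>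
        rw [hb] at b1 b2 <;> rw [hb'] at b3 b4 <;>
        simp only [Bool.false_eq_true, if_false, if_true] at b1 b2 b3 b4
      · exact absurd (hb.trans hb'.symm) hd2
      · rw [abs_sub_comm]
        refine le_trans ?_ (le_abs_self _)
        linarith
      · refine le_trans ?_ (le_abs_self _)
        linarith
      · exact absurd (hb.trans hb'.symm) hd2
    calc (1-2*lam) * sideLen Λ j ≤ sideLen Λ j - 2 * sideLen Λ (j+1) := hgap
      _ ≤ |z.im - z'.im| := hsep
      _ ≤ ‖z - z'‖ := habsim
      _ = dist z z' := hre.symm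

include h4 hL hlam in
/-- two generation-`n` squares that share a point are equal (as sets). -/
lemma cSquare_eq_of_inter {w w' : ℕ → Bool × Bool} {n : ℕ}
    {z z' : ℂ} (hz : z ∈ cSquare Λ w n) (hz' : z' ∈ cSquare Λ w' n)
    (hd : dist z z' < (1 - 2*lam) * sideLen Λ (n-1)) :
    cSquare Λ w n = cSquare Λ w' n := by
  by_cases hag : ∀ i < n, w i = w' i
  · exact cSquare_congr hag
  · exfalso
    push_neg at hag
    have hex : ∃ j, j < n ∧ w j ≠ w' j := hag
    classical
    set j := Nat.find hex with hjdef
    have hj : j < n ∧ w j ≠ w' j := Nat.find_spec hex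
    have hagree : ∀ i < j, w i = w' i := by
      intro i hi
      by_contra hne
      have : j ≤ i := Nat.find_le ⟨hi.trans hj.1, hne⟩
      omega
    have := cSquare_separated h4 hL hlam hj.1 hagree hj.2 hz hz'
    have hmono : sideLen Λ (n-1) ≤ sideLen Λ j := by
      apply sideLen_anti h4 hL hlam
      omega
    have hpos : 0 < 1 - 2*lam := by linarith
    nlinarith

include h4 hL hlam in
/-- two squares of possibly different generations that intersect are nested. -/
lemma cSquare_nested {v u : ℕ → Bool × Bool} {m l : ℕ} (hml : m ≤ l)
    (hinter : (cSquare Λ v m ∩ cSquare Λ u l).Nonempty) :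
    cSquare Λ u l ⊆ cSquare Λ v m := by
  obtain ⟨z, hzv, hzu⟩ := hinter
  have hzu' : z ∈ cSquare Λ u m := cSquare_subset_of_le h4 hL hlam u hml hzu
  have heq : cSquare Λ u m = cSquare Λ v m := by
    apply cSquare_eq_of_inter h4 hL hlam hzu' hzv
    rw [dist_self]
    have h1 := sideLen_pos h4 (m-1)
    have hpos : 0 < 1 - 2*lam := by linarith
    positivity
  exact (cSquare_subset_of_le h4 hL hlam u hml).trans heq.subset

end Cpt


section Arith
variable {ε c' : ℝ} (hε : 0 < ε) (hεc : ε < c') (hc1 : c' < 1)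

include hε hεc hc1 in
lemma realKey {a : ℝ} {J : ℕ} (ha : 0 < a) (haJ : a ≤ ε ^ J) :
    a / c' ^ J ≤ a ^ (1 - Real.log c' / Real.log ε) := by
  have hc0 : 0 < c' := hε.trans hεc
  have hε1 : ε < 1 := hεc.trans hc1
  have hlogε : Real.log ε < 0 := Real.log_neg hε hε1
  have hlogc : Real.log c' < 0 := Real.log_neg hc0 hc1
  set s : ℝ := 1 - Real.log c' / Real.log ε with hs
  have hloga : Real.log a ≤ J * Real.log ε := by
    calc Real.log a ≤ Real.log (ε ^ J) := (Real.log_le_log_iff ha (pow_pos hε J)).mpr haJ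
      _ = J * Real.log ε := by rw [Real.log_pow]
  have hratio : 0 < Real.log c' / Real.log ε := div_pos_iff.mpr (Or.inr ⟨hlogc, hlogε⟩)
  have key : (1 - s) * Real.log a ≤ J * Real.log c' := by
    have h1 : (Real.log c' / Real.log ε) * Real.log a ≤
        (Real.log c' / Real.log ε) * (J * Real.log ε) :=
      mul_le_mul_of_nonneg_left hloga hratio.le
    have h2 : (Real.log c' / Real.log ε) * (J * Real.log ε) = J * Real.log c' := by
      rw [mul_comm, mul_assoc, mul_comm (Real.log ε), div_mul_cancel₀ _ hlogε.ne]
    have h3 : (1 - s) = Real.log c' / Real.log ε := by rw [hs]; ring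
    rw [h3]
    linarith
  rw [div_le_iff₀ (pow_pos hc0 J)]
  have hrw1 : a ^ s * c' ^ J = Real.exp (s * Real.log a + J * Real.log c') := by
    rw [Real.exp_add, Real.rpow_def_of_pos ha, ← Real.log_pow, Real.exp_log (pow_pos hc0 J),
      mul_comm (Real.log a) s]
  have hrw2 : a = Real.exp (Real.log a) := (Real.exp_log ha).symm
  rw [hrw1]
  nth_rewrite 1 [hrw2]
  apply Real.exp_le_exp.mpr
  nlinarith [key]

lemma realKey2 {s a b : ℝ} (hs1 : s ≤ 1) (ha : 0 < a) (hab : a ≤ b) :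
    b ^ s * (a / b) ≤ a ^ s := by
  have hb : 0 < b := ha.trans_le hab
  have h1 : b ^ s * (a / b) = a * b ^ (s - 1) := by
    rw [Real.rpow_sub_one hb.ne']
    field_simp
  have h2 : b ^ (s-1) ≤ a ^ (s-1) := Real.rpow_le_rpow_of_nonpos ha hab (by linarith)
  have h3 : a * a ^ (s-1) = a ^ s := by
    nth_rewrite 1 [← Real.rpow_one a]
    rw [← Real.rpow_add ha]
    ring_nf
  calc b ^ s * (a / b) = a * b ^ (s-1) := h1
    _ ≤ a * a ^ (s-1) := by
        apply mul_le_mul_of_nonneg_left h2 ha.le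
    _ = a ^ s := h3

include hε hεc hc1 in
lemma ennKey {q : ℝ≥0∞} {J : ℕ} (hq0 : q ≠ 0) (hqt : q ≠ ∞)
    (hqJ : q ≤ ENNReal.ofReal ε ^ J) :
    (ENNReal.ofReal c')⁻¹ ^ J * q ≤ q ^ (1 - Real.log c' / Real.log ε) := by
  have hc0 : 0 < c' := hε.trans hεc
  set a : ℝ := q.toReal with hadef
  have ha : 0 < a := ENNReal.toReal_pos hq0 hqt
  have haJ : a ≤ ε ^ J := by
    rw [← ENNReal.ofReal_pow hε.le] at hqJ
    exact ENNReal.toReal_le_of_le_ofReal (pow_nonneg hε.le J) hqJ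
  have hq : q = ENNReal.ofReal a := (ENNReal.ofReal_toReal hqt).symm
  rw [hq]
  have h1 : (ENNReal.ofReal c')⁻¹ ^ J * ENNReal.ofReal a = ENNReal.ofReal (a / c' ^ J) := by
    rw [← ENNReal.inv_pow, ← ENNReal.ofReal_pow hc0.le,
      ← ENNReal.ofReal_inv_of_pos (pow_pos hc0 J), ← ENNReal.ofReal_mul (by positivity)]
    congr 1
    rw [div_eq_mul_inv, mul_comm]
  rw [h1, ENNReal.ofReal_rpow_of_pos ha]
  exact ENNReal.ofReal_le_ofReal (realKey hε hεc hc1 ha haJ)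

lemma ennKey2 {s : ℝ} (hs1 : s ≤ 1) {q Q : ℝ≥0∞} (hq0 : q ≠ 0) (hQt : Q ≠ ∞)
    (hqQ : q ≤ Q) : Q ^ s * (q / Q) ≤ q ^ s := by
  have hqt : q ≠ ∞ := by
    intro h; rw [h] at hqQ; exact hQt (top_le_iff.mp hqQ)
  have hQ0 : Q ≠ 0 := fun h => hq0 (le_antisymm (h ▸ hqQ) zero_le)
  set a : ℝ := q.toReal
  set b : ℝ := Q.toReal
  have ha : 0 < a := ENNReal.toReal_pos hq0 hqt
  have hb : 0 < b := ENNReal.toReal_pos hQ0 hQt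
  have hab : a ≤ b := ENNReal.toReal_le_toReal hqt hQt |>.mpr hqQ
  have e1 : q = ENNReal.ofReal a := (ENNReal.ofReal_toReal hqt).symm
  have e2 : Q = ENNReal.ofReal b := (ENNReal.ofReal_toReal hQt).symm
  rw [e1, e2, ENNReal.ofReal_rpow_of_pos ha, ENNReal.ofReal_rpow_of_pos hb,
    ← ENNReal.ofReal_div_of_pos hb, ← ENNReal.ofReal_mul (by positivity)]
  exact ENNReal.ofReal_le_ofReal (realKey2 hs1 ha hab)

end Arith


section Machinery
variable (Λ : ℕ → ℝ) (μ : Measure ℂ) (F : ℕ → Set (Set ℂ)) (c' : ℝ)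

def Q0 (Λ : ℕ → ℝ) : Set ℂ := cSquare Λ (fun _ => (false, false)) 0

/-- there is a good finite choice of children of `Q` inside `F (n+1)`. -/
def HasChild (n : ℕ) (Q : Set ℂ) : Prop :=
  ∃ t : Finset (Set ℂ), (↑t : Set (Set ℂ)) ⊆ F (n+1) ∧ (∀ R ∈ t, R ⊆ Q) ∧
    ENNReal.ofReal c' * μ Q ≤ ∑ R ∈ t, μ R

open Classical in
def childFn (n : ℕ) (Q : Set ℂ) : Finset (Set ℂ) :=
  if h : HasChild μ F c' n Q then h.choose else ∅

lemma childFn_spec {n : ℕ} {Q : Set ℂ} (h : HasChild μ F c' n Q) :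
    (↑(childFn μ F c' n Q) : Set (Set ℂ)) ⊆ F (n+1) ∧
      (∀ R ∈ childFn μ F c' n Q, R ⊆ Q) ∧
      ENNReal.ofReal c' * μ Q ≤ ∑ R ∈ childFn μ F c' n Q, μ R := by
  rw [childFn, dif_pos h]
  exact h.choose_spec

def GFam : ℕ → Finset (Set ℂ)
  | 0 => {Q0 Λ}
  | n + 1 => (GFam n).biUnion (childFn μ F c' n)

open Classical in
def parFn (n : ℕ) (R : Set ℂ) : Set ℂ :=
  if h : ∃ Q ∈ GFam Λ μ F c' n, R ⊆ Q then h.choose else ∅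

def sigFn (n : ℕ) (Q : Set ℂ) : ℝ≥0∞ :=
  ∑ R ∈ (GFam Λ μ F c' (n+1)).filter (fun R => R ⊆ Q), μ R

def wtFn : ℕ → Set ℂ → ℝ≥0∞
  | 0 => fun _ => 1
  | n + 1 => fun R =>
      wtFn n (parFn Λ μ F c' n R) * μ R / sigFn Λ μ F c' n (parFn Λ μ F c' n R)

def nuFn (n : ℕ) : Measure ℂ :=
  ∑ Q ∈ GFam Λ μ F c' n, (wtFn Λ μ F c' n Q / μ Q) • μ.restrict Q

lemma GFam_zero : GFam Λ μ F c' 0 = {Q0 Λ} := rfl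

lemma GFam_succ (n : ℕ) :
    GFam Λ μ F c' (n+1) = (GFam Λ μ F c' n).biUnion (childFn μ F c' n) := rfl

lemma wtFn_zero (Q : Set ℂ) : wtFn Λ μ F c' 0 Q = 1 := rfl

lemma wtFn_succ (n : ℕ) (R : Set ℂ) :
    wtFn Λ μ F c' (n+1) R =
      wtFn Λ μ F c' n (parFn Λ μ F c' n R) * μ R /
        sigFn Λ μ F c' n (parFn Λ μ F c' n R) := rfl

lemma parFn_spec {n : ℕ} {R : Set ℂ} (h : ∃ Q ∈ GFam Λ μ F c' n, R ⊆ Q) :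
    parFn Λ μ F c' n R ∈ GFam Λ μ F c' n ∧ R ⊆ parFn Λ μ F c' n R := by
  rw [parFn, dif_pos h]
  obtain ⟨h1, h2⟩ := h.choose_spec
  exact ⟨h1, h2⟩

lemma nuFn_apply (n : ℕ) (A : Set ℂ)
    (hmeas : ∀ Q ∈ GFam Λ μ F c' n, MeasurableSet Q) :
    nuFn Λ μ F c' n A = ∑ Q ∈ GFam Λ μ F c' n, wtFn Λ μ F c' n Q / μ Q * μ (A ∩ Q) := by
  rw [nuFn]
  rw [Measure.finset_sum_apply]
  refine Finset.sum_congr rfl fun Q hQ => ?_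
  rw [Measure.smul_apply, smul_eq_mul, Measure.restrict_apply' (hmeas Q hQ)]

end Machinery

/-- the union of all generation-`n` squares is measurable (it is a finite union). -/
lemma measurableSet_iUnion_cSquare (Λ : ℕ → ℝ) (n : ℕ) :
    MeasurableSet (⋃ w : ℕ → Bool × Bool, cSquare Λ w n) := by
  have : (⋃ w : ℕ → Bool × Bool, cSquare Λ w n) =
      ⋃ v : Fin n → Bool × Bool,
        cSquare Λ (fun k => if h : k < n then v ⟨k, h⟩ else (false, false)) n := by
    apply Set.Subset.antisymm
    · refine Set.iUnion_subset fun w => ?_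
      have : cSquare Λ w n =
          cSquare Λ (fun k => if h : k < n then w k else (false, false)) n := by
        apply cSquare_congr
        intro k hk
        simp [hk]
      rw [this]
      exact Set.subset_iUnion_of_subset (fun k : Fin n => w k) (by
        apply Set.Subset.antisymm_iff.mp rfl |>.1 |>.trans
        apply Eq.subset
        apply cSquare_congr
        intro k hk
        simp [hk])
    · refine Set.iUnion_subset fun v => ?_
      exact Set.subset_iUnion_of_subset _ subset_rfl
  rw [this]
  exact MeasurableSet.iUnion fun v => measurableSet_cSquare _ _

lemma measurableSet_cantorK (Λ : ℕ → ℝ) : MeasurableSet (cantorK Λ) :=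
  MeasurableSet.iInter fun n => measurableSet_iUnion_cSquare Λ n

theorem dimH_ge_aux (Λ : ℕ → ℝ) (lam : ℝ) (hlam : lam < 1 / 2)
    (hΛ : ∀ n, 1 / 4 ≤ Λ n ∧ Λ n ≤ lam)
    (μ : Measure ℂ) [IsProbabilityMeasure μ]
    (hμK : μ (cantorK Λ) = 1)
    (hμQ : ∀ (w : ℕ → Bool × Bool) (n : ℕ), μ (cSquare Λ w n) = (4 : ℝ≥0∞)⁻¹ ^ n)
    (ε c : ℝ) (hε : 0 < ε) (hεc : ε < c) (hc : c < 1)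
    (F : ℕ → Set (Set ℂ))
    (hFD : ∀ n, ∀ Q ∈ F n, ∃ (m : ℕ) (w : ℕ → Bool × Bool), Q = cSquare Λ w m)
    (hdisj : ∀ n, (F n).PairwiseDisjoint id)
    (hF0 : F 0 = {cSquare Λ (fun _ => (false, false)) 0})
    (hb : ∀ n, ∀ Q ∈ F (n + 1), ∃ Q' ∈ F n, Q ⊆ Q' ∧ μ Q ≤ ENNReal.ofReal ε * μ Q')
    (hc' : ∀ n, ∀ Q ∈ F n,
      ENNReal.ofReal c * μ Q ≤ ∑' R : {R : Set ℂ // R ∈ F (n + 1) ∧ R ⊆ Q}, μ R)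
    (cp : ℝ) (hεcp : ε < cp) (hcpc : cp < c) :
    ENNReal.ofReal (1 - Real.log cp / Real.log ε) ≤ dimH (⋂ n, ⋃ Q ∈ F n, Q) := by
  classical
  -- basic parameters
  have h4 : ∀ n, 1 / 4 ≤ Λ n := fun n => (hΛ n).1
  have hL : ∀ n, Λ n ≤ lam := fun n => (hΛ n).2
  have hlam14 : (1/4 : ℝ) ≤ lam := le_trans (h4 0) (hL 0)
  have hcp0 : 0 < cp := hε.trans hεcp
  have hcp1 : cp < 1 := hcpc.trans hc
  have hε1 : ε < 1 := by linarith
  set s : ℝ := 1 - Real.log cp / Real.log ε with hs_def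
  have hlogε : Real.log ε < 0 := Real.log_neg hε hε1
  have hlogcp : Real.log cp < 0 := Real.log_neg hcp0 hcp1
  have hratio_pos : 0 < Real.log cp / Real.log ε :=
    div_pos_iff.mpr (Or.inr ⟨hlogcp, hlogε⟩)
  have hratio_lt1 : Real.log cp / Real.log ε < 1 := by
    have hlt : Real.log ε < Real.log cp := Real.log_lt_log hε hεcp
    rw [div_lt_one_iff]
    right; right
    exact ⟨hlogε, hlt⟩
  have hs_pos : 0 < s := by rw [hs_def]; linarith
  have hs_lt1 : s < 1 := by rw [hs_def]; linarith
  -- ENNReal constants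
  set oc : ℝ≥0∞ := ENNReal.ofReal cp with hoc_def
  set oε : ℝ≥0∞ := ENNReal.ofReal ε with hoε_def
  have hoc0 : oc ≠ 0 := by
    rw [hoc_def]; simp [ENNReal.ofReal_eq_zero]; linarith
  have hoc_top : oc ≠ ∞ := ENNReal.ofReal_ne_top
  have hoc_lt1 : oc < 1 := by
    rw [hoc_def, ← ENNReal.ofReal_one]
    exact ENNReal.ofReal_lt_ofReal_iff_of_nonneg hcp0.le |>.mpr hcp1
  -- abbreviations
  set G : ℕ → Finset (Set ℂ) := GFam Λ μ F cp with hG_def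
  set wt : ℕ → Set ℂ → ℝ≥0∞ := wtFn Λ μ F cp with hwt_def
  set par : ℕ → Set ℂ → Set ℂ := parFn Λ μ F cp with hpar_def
  set sg : ℕ → Set ℂ → ℝ≥0∞ := sigFn Λ μ F cp with hsg_def
  set ν : ℕ → Measure ℂ := nuFn Λ μ F cp with hν_def
  -- basic facts about squares in the families
  have hQfacts : ∀ n, ∀ Q ∈ F n, 0 < μ Q ∧ μ Q ≤ 1 ∧ μ Q ≠ ∞ ∧ Q.Nonempty ∧
      MeasurableSet Q ∧ IsCompact Q := by
    intro n Q hQ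
    obtain ⟨m, w, rfl⟩ := hFD n Q hQ
    rw [hμQ w m]
    have h40 : (4:ℝ≥0∞)⁻¹ ≠ 0 := by simp
    have h4top : (4:ℝ≥0∞)⁻¹ ≠ ∞ := by simp
    refine ⟨?_, ?_, ?_, cSquare_nonempty h4 w m, measurableSet_cSquare w m,
      isCompact_cSquare h4 w m⟩
    · exact pos_iff_ne_zero.mpr (pow_ne_zero m h40)
    · exact pow_le_one' (ENNReal.inv_le_one.mpr (by norm_num)) m
    · exact ENNReal.pow_ne_top h4top
  -- uniqueness of the containing square in a disjoint family
  have hunique : ∀ n (R Q Q' : Set ℂ), R.Nonempty → Q ∈ F n → Q' ∈ F n →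
      R ⊆ Q → R ⊆ Q' → Q = Q' := by
    intro n R Q Q' hR hQ hQ' h1 h2
    by_contra hne
    have := hdisj n hQ hQ' hne
    obtain ⟨z, hz⟩ := hR
    exact (this.ne_of_mem (h1 hz) (h2 hz)) rfl
  -- HasChild holds on F n
  have hHC : ∀ n, ∀ Q ∈ F n, HasChild μ F cp n Q := by
    intro n Q hQ
    obtain ⟨hμ0, hμ1, hμtop, -, -, -⟩ := hQfacts n Q hQ
    have hlt : ENNReal.ofReal cp * μ Q < ENNReal.ofReal c * μ Q := by
      apply ENNReal.mul_lt_mul_left hμ0.ne' hμtop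
      exact ENNReal.ofReal_lt_ofReal_iff_of_nonneg hcp0.le |>.mpr hcpc
    have hlt2 : ENNReal.ofReal cp * μ Q <
        ∑' R : {R : Set ℂ // R ∈ F (n + 1) ∧ R ⊆ Q}, μ R := lt_of_lt_of_le hlt (hc' n Q hQ)
    rw [ENNReal.tsum_eq_iSup_sum] at hlt2
    rw [lt_iSup_iff] at hlt2
    obtain ⟨t0, ht0⟩ := hlt2
    refine ⟨t0.image Subtype.val, ?_, ?_, ?_⟩
    · intro R hR
      simp only [Finset.coe_image, Set.mem_image] at hR
      obtain ⟨x, -, rfl⟩ := hR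
      exact x.2.1
    · intro R hR
      simp only [Finset.mem_image] at hR
      obtain ⟨x, -, rfl⟩ := hR
      exact x.2.2
    · rw [Finset.sum_image (fun x _ y _ h => Subtype.ext h)]
      exact ht0.le
  -- G n ⊆ F n
  have hGF : ∀ n, ∀ Q ∈ G n, Q ∈ F n := by
    intro n
    induction n with
    | zero =>
      intro Q hQ
      rw [hG_def, GFam_zero, Finset.mem_singleton] at hQ
      rw [hQ, hF0, Q0]
      exact Set.mem_singleton _
    | succ n ih =>
      intro Q hQ
      rw [hG_def, GFam_succ, Finset.mem_biUnion] at hQ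
      obtain ⟨P, hP, hQP⟩ := hQ
      exact (childFn_spec μ F cp (hHC n P (ih P hP))).1 hQP
  have hGne : ∀ n (Q : Set ℂ), Q ∈ G n → Q.Nonempty :=
    fun n Q hQ => (hQfacts n Q (hGF n Q hQ)).2.2.2.1
  -- children of a member of G n
  have hchild_mem : ∀ n (P R : Set ℂ), P ∈ G n → R ∈ childFn μ F cp n P →
      R ∈ G (n+1) ∧ R ⊆ P := by
    intro n P R hP hR
    constructor
    · rw [hG_def, GFam_succ, Finset.mem_biUnion]
      exact ⟨P, hP, hR⟩
    · exact (childFn_spec μ F cp (hHC n P (hGF n P hP))).2.1 R hR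
  -- parent facts
  have hparent : ∀ n (R : Set ℂ), R ∈ G (n+1) → par n R ∈ G n ∧ R ⊆ par n R := by
    intro n R hR
    have hex : ∃ Q ∈ GFam Λ μ F cp n, R ⊆ Q := by
      rw [hG_def, GFam_succ, Finset.mem_biUnion] at hR
      obtain ⟨P, hP, hRP⟩ := hR
      exact ⟨P, hP, (hchild_mem n P R hP hRP).2⟩
    exact parFn_spec Λ μ F cp hex
  have hpar_eq : ∀ n (R Q : Set ℂ), R ∈ G (n+1) → Q ∈ G n → R ⊆ Q → par n R = Q := by
    intro n R Q hR hQ hsub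
    obtain ⟨hp1, hp2⟩ := hparent n R hR
    exact hunique n R _ Q (hGne (n+1) R hR) (hGF n _ hp1) (hGF n Q hQ) hp2 hsub
  -- lower bound for sigma
  have hsg_lower : ∀ n (Q : Set ℂ), Q ∈ G n → oc * μ Q ≤ sg n Q := by
    intro n Q hQ
    have hspec := childFn_spec μ F cp (hHC n Q (hGF n Q hQ))
    refine le_trans hspec.2.2 ?_
    apply Finset.sum_le_sum_of_subset
    intro R hR
    rw [Finset.mem_filter]
    exact ⟨(hchild_mem n Q R hQ hR).1, hspec.2.1 R hR⟩
  -- the squares in G (n+1) lying inside a set S are disjoint, so their measures sum below μ S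
  have hsum_le : ∀ n (S : Set ℂ) (t : Finset (Set ℂ)), (↑t : Set (Set ℂ)) ⊆ F n →
      (∀ R ∈ t, R ⊆ S) → ∑ R ∈ t, μ R ≤ μ S := by
    intro n S t htF hts
    have hdisj' : (↑t : Set (Set ℂ)).PairwiseDisjoint (fun R => R) :=
      fun x hx y hy hxy => hdisj n (htF hx) (htF hy) hxy
    have hmeas : ∀ R ∈ t, MeasurableSet R := fun R hR =>
      (hQfacts n R (htF hR)).2.2.2.2.1
    calc ∑ R ∈ t, μ R = μ (⋃ R ∈ t, R) := (measure_biUnion_finset hdisj' hmeas).symm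
      _ ≤ μ S := measure_mono (Set.iUnion₂_subset hts)
  have hsg_upper : ∀ n (Q : Set ℂ), Q ∈ G n → sg n Q ≤ μ Q := by
    intro n Q hQ
    rw [hsg_def, sigFn]
    apply hsum_le (n+1) Q
    · intro R hR
      simp only [Finset.coe_filter, Set.mem_setOf_eq] at hR
      exact hGF (n+1) R hR.1
    · intro R hR
      exact (Finset.mem_filter.mp hR).2
  have hsg_ne0 : ∀ n (Q : Set ℂ), Q ∈ G n → sg n Q ≠ 0 := by
    intro n Q hQ
    have h1 := hsg_lower n Q hQ
    have h2 := (hQfacts n Q (hGF n Q hQ)).1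
    intro h0
    rw [h0] at h1
    exact (ENNReal.mul_pos hoc0 h2.ne').ne' (le_antisymm h1 zero_le)
  have hsg_ne_top : ∀ n (Q : Set ℂ), Q ∈ G n → sg n Q ≠ ∞ := by
    intro n Q hQ
    exact ne_top_of_le_ne_top (hQfacts n Q (hGF n Q hQ)).2.2.1 (hsg_upper n Q hQ)
  have hQ0μ : μ (Q0 Λ) = 1 := by rw [Q0, hμQ]; exact pow_zero _
  -- conservation of weights
  have hwt_children : ∀ n (Q : Set ℂ), Q ∈ G n →
      ∑ R ∈ (G (n+1)).filter (fun R => R ⊆ Q), wt (n+1) R = wt n Q := by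
    intro n Q hQ
    have hcongr : ∀ R ∈ (G (n+1)).filter (fun R => R ⊆ Q),
        wt (n+1) R = wt n Q / sg n Q * μ R := by
      intro R hR
      rw [Finset.mem_filter] at hR
      have hp : par n R = Q := hpar_eq n R Q hR.1 hQ hR.2
      have e1 : wt (n+1) R = wt n (par n R) * μ R / sg n (par n R) := rfl
      rw [e1, hp, div_eq_mul_inv, div_eq_mul_inv]
      ring
    rw [Finset.sum_congr rfl hcongr, ← Finset.mul_sum]
    have hsum : ∑ R ∈ (G (n+1)).filter (fun R => R ⊆ Q), μ R = sg n Q := rfl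
    rw [hsum, ENNReal.div_mul_cancel (hsg_ne0 n Q hQ) (hsg_ne_top n Q hQ)]
  have hfiber : ∀ n (Q : Set ℂ), Q ∈ G n →
      (G (n+1)).filter (fun R => par n R = Q) = (G (n+1)).filter (fun R => R ⊆ Q) := by
    intro n Q hQ
    apply Finset.filter_congr
    intro R hR
    constructor
    · rintro rfl
      exact (hparent n R hR).2
    · intro hsub
      exact hpar_eq n R Q hR hQ hsub
  have hwt_total : ∀ n, ∑ Q ∈ G n, wt n Q = 1 := by
    intro n
    induction n with
    | zero =>
      rw [hG_def, GFam_zero, Finset.sum_singleton]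
      rfl
    | succ n ih =>
      have hmaps : ∀ R ∈ G (n+1), par n R ∈ G n := fun R hR => (hparent n R hR).1
      rw [← Finset.sum_fiberwise_of_maps_to hmaps (wt (n+1))]
      calc ∑ Q ∈ G n, ∑ R ∈ (G (n+1)).filter (fun R => par n R = Q), wt (n+1) R
          = ∑ Q ∈ G n, wt n Q :=
            Finset.sum_congr rfl fun Q hQ => by rw [hfiber n Q hQ, hwt_children n Q hQ]
        _ = 1 := ih
  -- growth bound for weights
  have hwt_le : ∀ n (Q : Set ℂ), Q ∈ G n → wt n Q ≤ oc⁻¹ ^ n * μ Q := by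
    intro n
    induction n with
    | zero =>
      intro Q hQ
      rw [hG_def, GFam_zero, Finset.mem_singleton] at hQ
      subst hQ
      rw [hQ0μ]
      simp [hwt_def, wtFn_zero]
    | succ n ih =>
      intro R hR
      obtain ⟨hpmem, hpsub⟩ := hparent n R hR
      have hμP0 := (hQfacts n _ (hGF n _ hpmem)).1
      have hμPtop := (hQfacts n _ (hGF n _ hpmem)).2.2.1
      have e1 : wt (n+1) R = wt n (par n R) * μ R / sg n (par n R) := rfl
      rw [e1]
      have h2 : wt n (par n R) * μ R / sg n (par n R) ≤
          (oc⁻¹ ^ n * μ (par n R)) * μ R / (oc * μ (par n R)) :=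
        ENNReal.div_le_div (mul_le_mul_left (ih _ hpmem) _) (hsg_lower n _ hpmem)
      refine h2.trans (le_of_eq ?_)
      rw [div_eq_mul_inv, ENNReal.mul_inv (Or.inl hoc0) (Or.inl hoc_top), pow_succ]
      calc oc⁻¹ ^ n * μ (par n R) * μ R * (oc⁻¹ * (μ (par n R))⁻¹)
          = (oc⁻¹ ^ n * oc⁻¹) * μ R * (μ (par n R) * (μ (par n R))⁻¹) := by ring
        _ = oc⁻¹ ^ n * oc⁻¹ * μ R := by
            rw [ENNReal.mul_inv_cancel hμP0.ne' hμPtop, mul_one]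
  -- decay of measures along the stopped families
  have hμG_le : ∀ n (Q : Set ℂ), Q ∈ G n → μ Q ≤ oε ^ n := by
    intro n
    induction n with
    | zero =>
      intro Q hQ
      rw [hG_def, GFam_zero, Finset.mem_singleton] at hQ
      subst hQ
      rw [hQ0μ, pow_zero]
    | succ n ih =>
      intro R hR
      obtain ⟨Q', hQ', hsub, hbound⟩ := hb n R (hGF (n+1) R hR)
      have hQ'par : Q' = par n R :=
        hunique n R Q' (par n R) (hGne (n+1) R hR) hQ' (hGF n _ (hparent n R hR).1)
          hsub (hparent n R hR).2
      calc μ R ≤ oε * μ Q' := hbound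
        _ ≤ oε * oε ^ n := by
            apply mul_le_mul_right
            rw [hQ'par]
            exact ih _ (hparent n R hR).1
        _ = oε ^ (n+1) := by rw [pow_succ, mul_comm]
  -- the key Frostman-type bound on weights
  have hwt_rpow : ∀ n (Q : Set ℂ), Q ∈ G n → wt n Q ≤ (μ Q) ^ s := by
    intro n Q hQ
    have h1 := hwt_le n Q hQ
    have h2 := hμG_le n Q hQ
    have h3 := ennKey hε hεcp hcp1 (q := μ Q) (J := n)
      (hQfacts n Q (hGF n Q hQ)).1.ne' (hQfacts n Q (hGF n Q hQ)).2.2.1 h2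
    exact h1.trans h3
  -- first facts about the measures ν n
  have hGmeas : ∀ n, ∀ Q ∈ G n, MeasurableSet Q :=
    fun n Q hQ => (hQfacts n Q (hGF n Q hQ)).2.2.2.2.1
  have hν_apply : ∀ n (A : Set ℂ), ν n A = ∑ Q ∈ G n, wt n Q / μ Q * μ (A ∩ Q) :=
    fun n A => nuFn_apply Λ μ F cp n A (hGmeas n)
  have hν_univ : ∀ n, ν n Set.univ = 1 := by
    intro n
    rw [hν_apply]
    have h1 : ∀ Q ∈ G n, wt n Q / μ Q * μ (Set.univ ∩ Q) = wt n Q := by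
      intro Q hQ
      rw [Set.univ_inter, ENNReal.div_mul_cancel (hQfacts n Q (hGF n Q hQ)).1.ne'
        (hQfacts n Q (hGF n Q hQ)).2.2.1]
    rw [Finset.sum_congr rfl h1, hwt_total n]
  -- ========== the core estimate : ν n S ≤ C₂ (μ S)^s for generation squares S ==========
  set C2 : ℝ≥0∞ := 1 + oc⁻¹ * (1 - oc)⁻¹ with hC2_def
  have hC2_1 : 1 ≤ C2 := le_self_add
  have hEst : ∀ n k (v : ℕ → Bool × Bool),
      ν n (cSquare Λ v k) ≤ C2 * (μ (cSquare Λ v k)) ^ s := by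
    intro n k v
    set S : Set ℂ := cSquare Λ v k with hS_def
    have hμS : μ S = (4:ℝ≥0∞)⁻¹ ^ k := hμQ v k
    have hμS0 : μ S ≠ 0 := by rw [hμS]; exact pow_ne_zero k (by simp)
    have hμStop : μ S ≠ ∞ := by rw [hμS]; exact ENNReal.pow_ne_top (by simp)
    rcases Nat.eq_zero_or_pos k with hk0 | hkpos
    · subst hk0
      have hμS1 : μ S = 1 := by rw [hμS, pow_zero]
      calc ν n S ≤ ν n Set.univ := measure_mono (Set.subset_univ S)
        _ = 1 := hν_univ n
        _ ≤ C2 * (μ S) ^ s := by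
            rw [hμS1, ENNReal.one_rpow, mul_one]
            exact hC2_1
    · -- k ≥ 1
      have htri : ∀ m (Q : Set ℂ), Q ∈ G m → Q ⊆ S ∨ S ⊆ Q ∨ μ (S ∩ Q) = 0 := by
        intro m Q hQ
        obtain ⟨l, u, rfl⟩ := hFD m Q (hGF m Q hQ)
        rcases Set.eq_empty_or_nonempty (S ∩ cSquare Λ u l) with hemp | hne
        · right; right; rw [hemp]; exact measure_empty
        · rcases le_or_gt k l with hkl | hlk
          · left
            exact cSquare_nested h4 hL hlam hkl hne
          · right; left
            exact cSquare_nested h4 hL hlam hlk.le (by rwa [Set.inter_comm])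
      have hSne : S.Nonempty := cSquare_nonempty h4 v k
      have hstrad_card : ∀ m, ((G m).filter (fun Q => S ⊆ Q ∧ ¬ Q ⊆ S)).card ≤ 1 := by
        intro m
        rw [Finset.card_le_one]
        intro Q1 h1 Q2 h2
        rw [Finset.mem_filter] at h1 h2
        exact hunique m S Q1 Q2 hSne (hGF m Q1 h1.1) (hGF m Q2 h2.1) h1.2.1 h2.2.1
      set T : ℕ → ℝ≥0∞ := fun m => ∑ Q ∈ (G m).filter (fun Q => Q ⊆ S), wt m Q with hT_def
      set X : ℕ → ℝ≥0∞ := fun m =>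
        (if ∃ Q ∈ G m, S ⊆ Q ∧ ¬ Q ⊆ S then oc⁻¹ ^ (m+1) * μ S else 0) with hX_def
      -- single step of the stopping recursion
      have hstep : ∀ m, T (m+1) ≤ T m + X m := by
        intro m
        have hmaps : ∀ R ∈ (G (m+1)).filter (fun R => R ⊆ S), par m R ∈ G m := by
          intro R hR
          exact (hparent m R (Finset.mem_filter.mp hR).1).1
        have hfib := Finset.sum_fiberwise_of_maps_to hmaps (wt (m+1))
        have hTsucc : T (m+1) = ∑ Q ∈ G m,
            ∑ R ∈ ((G (m+1)).filter (fun R => R ⊆ S)).filter (fun R => par m R = Q),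
              wt (m+1) R := hfib.symm
        rw [hTsucc]
        -- bound the inner sums
        have hinner : ∀ Q ∈ G m,
            (∑ R ∈ ((G (m+1)).filter (fun R => R ⊆ S)).filter (fun R => par m R = Q),
              wt (m+1) R) ≤
            (if Q ⊆ S then wt m Q else (if S ⊆ Q then oc⁻¹ ^ (m+1) * μ S else 0)) := by
          intro Q hQ
          by_cases h1 : Q ⊆ S
          · rw [if_pos h1]
            rw [← hwt_children m Q hQ]
            apply Finset.sum_le_sum_of_subset
            intro R hR
            simp only [Finset.mem_filter] at hR ⊢
            obtain ⟨⟨hR1, -⟩, hR3⟩ := hR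
            refine ⟨hR1, ?_⟩
            rw [← hR3]
            exact (hparent m R hR1).2
          · rw [if_neg h1]
            by_cases h2 : S ⊆ Q
            · rw [if_pos h2]
              have hcongr : ∀ R ∈ ((G (m+1)).filter (fun R => R ⊆ S)).filter
                  (fun R => par m R = Q), wt (m+1) R = wt m Q / sg m Q * μ R := by
                intro R hR
                rw [Finset.mem_filter] at hR
                have e1 : wt (m+1) R = wt m (par m R) * μ R / sg m (par m R) := rfl
                rw [e1, hR.2, div_eq_mul_inv, div_eq_mul_inv]
                ring
              rw [Finset.sum_congr rfl hcongr, ← Finset.mul_sum]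
              have hsumR : ∑ R ∈ ((G (m+1)).filter (fun R => R ⊆ S)).filter
                  (fun R => par m R = Q), μ R ≤ μ S := by
                apply hsum_le (m+1) S
                · intro R hR
                  simp only [Finset.coe_filter, Set.mem_setOf_eq,
                    Finset.mem_filter] at hR
                  exact hGF (m+1) R hR.1.1
                · intro R hR
                  simp only [Finset.mem_filter] at hR
                  exact hR.1.2
              have hμQ0 := (hQfacts m Q (hGF m Q hQ)).1
              have hμQtop := (hQfacts m Q (hGF m Q hQ)).2.2.1
              calc wt m Q / sg m Q *
                    (∑ R ∈ ((G (m+1)).filter (fun R => R ⊆ S)).filter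
                      (fun R => par m R = Q), μ R)
                  ≤ wt m Q / (oc * μ Q) * μ S := by
                    apply mul_le_mul (ENNReal.div_le_div le_rfl (hsg_lower m Q hQ)) hsumR
                      zero_le zero_le
                _ ≤ (oc⁻¹ ^ m * μ Q) / (oc * μ Q) * μ S := by
                    apply mul_le_mul_left
                    exact ENNReal.div_le_div (hwt_le m Q hQ) le_rfl
                _ = oc⁻¹ ^ (m+1) * μ S := by
                    congr 1
                    rw [div_eq_mul_inv, ENNReal.mul_inv (Or.inl hoc0) (Or.inl hoc_top),
                      pow_succ]
                    calc oc⁻¹ ^ m * μ Q * (oc⁻¹ * (μ Q)⁻¹)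
                        = (oc⁻¹ ^ m * oc⁻¹) * (μ Q * (μ Q)⁻¹) := by ring
                      _ = oc⁻¹ ^ m * oc⁻¹ := by
                          rw [ENNReal.mul_inv_cancel hμQ0.ne' hμQtop, mul_one]
            · rw [if_neg h2]
              have hempty : ((G (m+1)).filter (fun R => R ⊆ S)).filter
                  (fun R => par m R = Q) = ∅ := by
                apply Finset.eq_empty_of_forall_notMem
                intro R hR
                rw [Finset.mem_filter, Finset.mem_filter] at hR
                obtain ⟨⟨hR1, hRS⟩, hRQ⟩ := hR
                have hRsubQ : R ⊆ Q := by rw [← hRQ]; exact (hparent m R hR1).2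
                have hRne := hGne (m+1) R hR1
                have hμR0 := (hQfacts (m+1) R (hGF (m+1) R hR1)).1
                rcases htri m Q hQ with h | h | h
                · exact h1 h
                · exact h2 h
                · have : μ R ≤ μ (S ∩ Q) :=
                    measure_mono (Set.subset_inter hRS hRsubQ)
                  rw [h] at this
                  exact hμR0.ne' (le_antisymm this zero_le)
              rw [hempty, Finset.sum_empty]
        calc ∑ Q ∈ G m, ∑ R ∈ ((G (m+1)).filter (fun R => R ⊆ S)).filter
              (fun R => par m R = Q), wt (m+1) R
            ≤ ∑ Q ∈ G m,
              (if Q ⊆ S then wt m Q else (if S ⊆ Q then oc⁻¹ ^ (m+1) * μ S else 0)) :=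
              Finset.sum_le_sum hinner
          _ = T m + ∑ Q ∈ (G m).filter (fun Q => ¬ Q ⊆ S),
              (if S ⊆ Q then oc⁻¹ ^ (m+1) * μ S else 0) := by
              rw [Finset.sum_ite]
          _ ≤ T m + X m := by
              apply add_le_add_right
              rw [← Finset.sum_filter]
              by_cases hex : ∃ Q ∈ G m, S ⊆ Q ∧ ¬ Q ⊆ S
              · have hXm : X m = oc⁻¹ ^ (m+1) * μ S := by rw [hX_def]; exact if_pos hex
                rw [hXm]
                have hsub : ((G m).filter (fun Q => ¬ Q ⊆ S)).filter (fun Q => S ⊆ Q) ⊆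
                    (G m).filter (fun Q => S ⊆ Q ∧ ¬ Q ⊆ S) := by
                  intro Q hQ
                  rw [Finset.mem_filter, Finset.mem_filter] at hQ
                  rw [Finset.mem_filter]
                  exact ⟨hQ.1.1, hQ.2, hQ.1.2⟩
                calc ∑ Q ∈ ((G m).filter (fun Q => ¬ Q ⊆ S)).filter (fun Q => S ⊆ Q),
                      oc⁻¹ ^ (m+1) * μ S
                    = (((G m).filter (fun Q => ¬ Q ⊆ S)).filter (fun Q => S ⊆ Q)).card •
                      (oc⁻¹ ^ (m+1) * μ S) := Finset.sum_const _
                  _ ≤ 1 * (oc⁻¹ ^ (m+1) * μ S) := by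
                      rw [nsmul_eq_mul]
                      apply mul_le_mul_left
                      have := le_trans (Finset.card_le_card hsub) (hstrad_card m)
                      exact_mod_cast Nat.cast_le.mpr this
                  _ = oc⁻¹ ^ (m+1) * μ S := one_mul _
              · have hXm : X m = 0 := by rw [hX_def]; exact if_neg hex
                rw [hXm]
                have hempty : ((G m).filter (fun Q => ¬ Q ⊆ S)).filter (fun Q => S ⊆ Q) = ∅ := by
                  apply Finset.eq_empty_of_forall_notMem
                  intro Q hQ
                  rw [Finset.mem_filter, Finset.mem_filter] at hQ
                  exact hex ⟨Q, hQ.1.1, hQ.2, hQ.1.2⟩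
                rw [hempty, Finset.sum_empty]
      -- T 0 = 0
      have hT0 : T 0 = 0 := by
        rw [hT_def]
        apply Finset.sum_eq_zero
        intro Q hQ
        rw [Finset.mem_filter, hG_def, GFam_zero, Finset.mem_singleton] at hQ
        exfalso
        have h1 : μ (Q0 Λ) ≤ μ S := hQ.1 ▸ measure_mono hQ.2
        rw [hQ0μ, hμS] at h1
        have h40 : (1:ℝ≥0∞) < 4 := by norm_num
        have h2 : (4:ℝ≥0∞)⁻¹ ^ k < 1 :=
          pow_lt_one₀ zero_le (ENNReal.inv_lt_one.mpr h40) hkpos.ne'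
        exact h2.not_ge h1
      -- unrolling
      have hTle : ∀ m, T m ≤ ∑ j ∈ Finset.range m, X j := by
        intro m
        induction m with
        | zero => rw [hT0]; exact zero_le
        | succ m ih =>
          calc T (m+1) ≤ T m + X m := hstep m
            _ ≤ (∑ j ∈ Finset.range m, X j) + X m := add_le_add_left ih _
            _ = ∑ j ∈ Finset.range (m+1), X j := (Finset.sum_range_succ X m).symm
      -- geometric bound on the X-sum
      have hXsum : ∀ m, ∑ j ∈ Finset.range m, X j ≤ oc⁻¹ * (1-oc)⁻¹ * (μ S) ^ s := by
        intro m
        have hXval : ∀ j, X j = if (∃ Q ∈ G j, S ⊆ Q ∧ ¬ Q ⊆ S)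
            then oc⁻¹ ^ (j+1) * μ S else 0 := fun j => rfl
        set Jset : Finset ℕ :=
          (Finset.range m).filter (fun j => ∃ Q ∈ G j, S ⊆ Q ∧ ¬ Q ⊆ S) with hJset_def
        have hsum_eq : ∑ j ∈ Finset.range m, X j = ∑ j ∈ Jset, oc⁻¹ ^ (j+1) * μ S := by
          rw [hJset_def, Finset.sum_filter]
        rw [hsum_eq]
        rcases Jset.eq_empty_or_nonempty with hJe | hJne
        · rw [hJe, Finset.sum_empty]
          exact zero_le
        · set J := Jset.max' hJne with hJ_def
          have hJP : ∃ Q ∈ G J, S ⊆ Q ∧ ¬ Q ⊆ S :=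
            (Finset.mem_filter.mp (Jset.max'_mem hJne)).2
          obtain ⟨QJ, hQJ, hSQJ, -⟩ := hJP
          have hμSεJ : μ S ≤ oε ^ J := le_trans (measure_mono hSQJ) (hμG_le J QJ hQJ)
          have hkey : oc⁻¹ ^ J * μ S ≤ (μ S) ^ s :=
            ennKey hε hεcp hcp1 hμS0 hμStop hμSεJ
          have hgeom : ∑ j ∈ Finset.range (J+1), oc⁻¹ ^ j ≤ oc⁻¹ ^ J * (1-oc)⁻¹ := by
            have hre : ∑ j ∈ Finset.range (J+1), oc⁻¹ ^ j
                = ∑ i ∈ Finset.range (J+1), oc⁻¹ ^ (J - i) := by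
              rw [← Finset.sum_range_reflect]
              simp only [Nat.add_sub_cancel]
            rw [hre]
            have hterm : ∀ i ∈ Finset.range (J+1), oc⁻¹ ^ (J - i) ≤ oc⁻¹ ^ J * oc ^ i := by
              intro i hi
              rw [Finset.mem_range, Nat.lt_succ_iff] at hi
              calc oc⁻¹ ^ (J-i) = oc⁻¹ ^ (J-i) * (oc⁻¹ * oc) ^ i := by
                    rw [ENNReal.inv_mul_cancel hoc0 hoc_top, one_pow, mul_one]
                _ = (oc⁻¹ ^ (J-i) * oc⁻¹ ^ i) * oc ^ i := by rw [mul_pow]; ring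
                _ = oc⁻¹ ^ J * oc ^ i := by rw [← pow_add, Nat.sub_add_cancel hi]
                _ ≤ oc⁻¹ ^ J * oc ^ i := le_rfl
            calc ∑ i ∈ Finset.range (J+1), oc⁻¹ ^ (J - i)
                ≤ ∑ i ∈ Finset.range (J+1), oc⁻¹ ^ J * oc ^ i := Finset.sum_le_sum hterm
              _ = oc⁻¹ ^ J * ∑ i ∈ Finset.range (J+1), oc ^ i := by rw [Finset.mul_sum]
              _ ≤ oc⁻¹ ^ J * ∑' i, oc ^ i :=
                  mul_le_mul_right (ENNReal.sum_le_tsum _) _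
              _ = oc⁻¹ ^ J * (1-oc)⁻¹ := by rw [ENNReal.tsum_geometric]
          calc ∑ j ∈ Jset, oc⁻¹ ^ (j+1) * μ S
              ≤ ∑ j ∈ Finset.range (J+1), oc⁻¹ ^ (j+1) * μ S := by
                apply Finset.sum_le_sum_of_subset
                intro j hj
                rw [Finset.mem_range, Nat.lt_succ_iff]
                exact Finset.le_max' Jset j hj
            _ = oc⁻¹ * ((∑ j ∈ Finset.range (J+1), oc⁻¹ ^ j) * μ S) := by
                rw [Finset.sum_mul, Finset.mul_sum]
                refine Finset.sum_congr rfl fun j hj => ?_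
                rw [pow_succ]
                ring
            _ ≤ oc⁻¹ * ((oc⁻¹ ^ J * (1-oc)⁻¹) * μ S) := by
                apply mul_le_mul_right
                exact mul_le_mul_left hgeom _
            _ = oc⁻¹ * (1-oc)⁻¹ * (oc⁻¹ ^ J * μ S) := by ring
            _ ≤ oc⁻¹ * (1-oc)⁻¹ * (μ S) ^ s := mul_le_mul_right hkey _
      -- assemble
      rw [hν_apply]
      have hterm : ∀ Q ∈ G n, wt n Q / μ Q * μ (S ∩ Q) ≤
          (if Q ⊆ S then wt n Q else (if S ⊆ Q then (μ S) ^ s else 0)) := by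
        intro Q hQ
        have hμQ0 := (hQfacts n Q (hGF n Q hQ)).1
        have hμQtop := (hQfacts n Q (hGF n Q hQ)).2.2.1
        by_cases h1 : Q ⊆ S
        · rw [if_pos h1]
          calc wt n Q / μ Q * μ (S ∩ Q) ≤ wt n Q / μ Q * μ Q :=
              mul_le_mul_right (measure_mono Set.inter_subset_right) _
            _ = wt n Q := ENNReal.div_mul_cancel hμQ0.ne' hμQtop
        · rw [if_neg h1]
          by_cases h2 : S ⊆ Q
          · rw [if_pos h2]
            rw [Set.inter_eq_self_of_subset_left h2]
            calc wt n Q / μ Q * μ S ≤ (μ Q) ^ s / μ Q * μ S :=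
                  mul_le_mul_left (ENNReal.div_le_div (hwt_rpow n Q hQ) le_rfl) _
              _ = (μ Q) ^ s * (μ S / μ Q) := by
                  rw [div_eq_mul_inv, div_eq_mul_inv]
                  ring
              _ ≤ (μ S) ^ s := ennKey2 hs_lt1.le hμS0 hμQtop (measure_mono h2)
          · rw [if_neg h2]
            rcases htri n Q hQ with h | h | h
            · exact absurd h h1
            · exact absurd h h2
            · rw [h, mul_zero]
      calc ∑ Q ∈ G n, wt n Q / μ Q * μ (S ∩ Q)
          ≤ ∑ Q ∈ G n, (if Q ⊆ S then wt n Q else (if S ⊆ Q then (μ S) ^ s else 0)) :=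
            Finset.sum_le_sum hterm
        _ = T n + ∑ Q ∈ (G n).filter (fun Q => ¬ Q ⊆ S),
            (if S ⊆ Q then (μ S) ^ s else 0) := by rw [Finset.sum_ite]
        _ ≤ T n + (μ S) ^ s := by
            apply add_le_add_right
            rw [← Finset.sum_filter]
            have hsub : ((G n).filter (fun Q => ¬ Q ⊆ S)).filter (fun Q => S ⊆ Q) ⊆
                (G n).filter (fun Q => S ⊆ Q ∧ ¬ Q ⊆ S) := by
              intro Q hQ
              rw [Finset.mem_filter, Finset.mem_filter] at hQ
              rw [Finset.mem_filter]
              exact ⟨hQ.1.1, hQ.2, hQ.1.2⟩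
            calc ∑ Q ∈ ((G n).filter (fun Q => ¬ Q ⊆ S)).filter (fun Q => S ⊆ Q), (μ S) ^ s
                = (((G n).filter (fun Q => ¬ Q ⊆ S)).filter (fun Q => S ⊆ Q)).card •
                  (μ S) ^ s := Finset.sum_const _
              _ ≤ 1 * (μ S) ^ s := by
                  rw [nsmul_eq_mul]
                  apply mul_le_mul_left
                  have := le_trans (Finset.card_le_card hsub) (hstrad_card n)
                  exact_mod_cast Nat.cast_le.mpr this
              _ = (μ S) ^ s := one_mul _
        _ ≤ (oc⁻¹ * (1-oc)⁻¹ * (μ S) ^ s) + (μ S) ^ s :=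
            add_le_add_left ((hTle n).trans (hXsum n)) _
        _ = C2 * (μ S) ^ s := by
            rw [hC2_def]
            ring
  -- ========== μ vanishes outside K ==========
  have hμKc : μ (cantorK Λ)ᶜ = 0 := by
    have hKmeas := measurableSet_cantorK Λ
    rw [measure_compl hKmeas (measure_ne_top μ _), hμK, measure_univ, tsub_self]
  -- ========== choice of scale ==========
  set r0 : ℝ := (1 - 2*lam)/2 with hr0_def
  have hsep_pos : 0 < 1 - 2*lam := by linarith
  have hr0_pos : 0 < r0 := by rw [hr0_def]; linarith
  have hchoosek : ∀ ρ : ℝ, 0 < ρ → ρ < r0 → ∃ k : ℕ, 0 < k ∧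
      sideLen Λ k ≤ 2*ρ/(1-2*lam) ∧ 2*ρ < (1-2*lam) * sideLen Λ (k-1) := by
    intro ρ hρ hρr0
    have hex : ∃ k, sideLen Λ k ≤ 2*ρ/(1-2*lam) := by
      have htd := sideLen_tendsto h4 hL hlam
      have hpos : 0 < 2*ρ/(1-2*lam) := by positivity
      obtain ⟨k, hk⟩ := (htd.eventually_lt_const hpos).exists
      exact ⟨k, hk.le⟩
    classical
    refine ⟨Nat.find hex, ?_, Nat.find_spec hex, ?_⟩
    · rcases Nat.eq_zero_or_pos (Nat.find hex) with h0 | h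
      · exfalso
        have h1 := Nat.find_spec hex
        rw [h0, sideLen_zero] at h1
        have h2 : 2*ρ/(1-2*lam) < 1 := by
          rw [div_lt_one hsep_pos]
          rw [hr0_def] at hρr0
          linarith
        linarith
      · exact h
    · have hmin : ¬ (sideLen Λ (Nat.find hex - 1) ≤ 2*ρ/(1-2*lam)) := by
        apply Nat.find_min hex
        have : 0 < Nat.find hex := by
          rcases Nat.eq_zero_or_pos (Nat.find hex) with h0 | h
          · exfalso
            have h1 := Nat.find_spec hex
            rw [h0, sideLen_zero] at h1
            have h2 : 2*ρ/(1-2*lam) < 1 := by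
              rw [div_lt_one hsep_pos]
              rw [hr0_def] at hρr0
              linarith
            linarith
          · exact h
        omega
      push_neg at hmin
      calc 2*ρ = (2*ρ/(1-2*lam)) * (1-2*lam) := by field_simp
        _ < sideLen Λ (Nat.find hex - 1) * (1-2*lam) := by
            apply mul_lt_mul_of_pos_right hmin hsep_pos
        _ = (1-2*lam) * sideLen Λ (Nat.find hex - 1) := mul_comm _ _
  -- ========== the ball estimate ==========
  set C3 : ℝ≥0∞ := C2 * ENNReal.ofReal ((2/(1-2*lam))^s) with hC3_def
  have hBall : ∀ n (x : ℂ) (ρ : ℝ), 0 < ρ → ρ < r0 →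
      ν n (Metric.ball x ρ) ≤ C3 * ENNReal.ofReal (ρ^s) := by
    intro n x ρ hρ hρr0
    rcases Set.eq_empty_or_nonempty (Metric.ball x ρ ∩ cantorK Λ) with hemp | hne
    · have hz : ν n (Metric.ball x ρ) = 0 := by
        rw [hν_apply]
        apply Finset.sum_eq_zero
        intro Q hQ
        have hq : μ (Metric.ball x ρ ∩ Q) = 0 := by
          apply measure_mono_null (t := (Metric.ball x ρ ∩ cantorK Λ) ∪ (cantorK Λ)ᶜ)
          · intro z hz
            by_cases hzK : z ∈ cantorK Λ
            · exact Or.inl ⟨hz.1, hzK⟩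
            · exact Or.inr hzK
          · rw [hemp, Set.empty_union]
            exact hμKc
        rw [hq, mul_zero]
      rw [hz]
      exact zero_le
    · obtain ⟨y0, hy0B, hy0K⟩ := hne
      obtain ⟨k, hk0, hk1, hk2⟩ := hchoosek ρ hρ hρr0
      obtain ⟨v, hy0v⟩ := Set.mem_iUnion.mp (Set.mem_iInter.mp hy0K k)
      have hsub : Metric.ball x ρ ∩ cantorK Λ ⊆ cSquare Λ v k := by
        rintro z ⟨hzB, hzK⟩
        obtain ⟨u, hzu⟩ := Set.mem_iUnion.mp (Set.mem_iInter.mp hzK k)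
        have hdist : dist z y0 < (1-2*lam) * sideLen Λ (k-1) := by
          calc dist z y0 ≤ dist z x + dist x y0 := dist_triangle z x y0
            _ < ρ + ρ := by
                apply add_lt_add
                · exact Metric.mem_ball.mp hzB
                · rw [dist_comm x y0]
                  exact Metric.mem_ball.mp hy0B
            _ = 2*ρ := by ring
            _ < (1-2*lam) * sideLen Λ (k-1) := hk2
        have heq : cSquare Λ u k = cSquare Λ v k :=
          cSquare_eq_of_inter h4 hL hlam hzu hy0v hdist
        rw [← heq]
        exact hzu
      have hball_le : ν n (Metric.ball x ρ) ≤ ν n (cSquare Λ v k) := by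
        rw [hν_apply, hν_apply]
        apply Finset.sum_le_sum
        intro Q hQ
        apply mul_le_mul_right
        calc μ (Metric.ball x ρ ∩ Q) ≤ μ ((cSquare Λ v k ∩ Q) ∪ (cantorK Λ)ᶜ) := by
              apply measure_mono
              rintro z ⟨hz1, hz2⟩
              by_cases hzK : z ∈ cantorK Λ
              · exact Or.inl ⟨hsub ⟨hz1, hzK⟩, hz2⟩
              · exact Or.inr hzK
          _ ≤ μ (cSquare Λ v k ∩ Q) + μ (cantorK Λ)ᶜ := measure_union_le _ _
          _ = μ (cSquare Λ v k ∩ Q) := by rw [hμKc, add_zero]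
      have hμSsize : μ (cSquare Λ v k) ≤ ENNReal.ofReal (2*ρ/(1-2*lam)) := by
        rw [hμQ]
        have h14 : (4:ℝ≥0∞)⁻¹ = ENNReal.ofReal (1/4 : ℝ) := by
          rw [one_div, ENNReal.ofReal_inv_of_pos (by norm_num)]
          congr 1
          rw [ENNReal.ofReal_ofNat]
        calc (4:ℝ≥0∞)⁻¹ ^ k = ENNReal.ofReal ((1/4 : ℝ)^k) := by
              rw [h14, ENNReal.ofReal_pow (by norm_num)]
          _ ≤ ENNReal.ofReal (sideLen Λ k) :=
              ENNReal.ofReal_le_ofReal (pow_le_sideLen h4 k)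
          _ ≤ ENNReal.ofReal (2*ρ/(1-2*lam)) := ENNReal.ofReal_le_ofReal hk1
      have hfin : (μ (cSquare Λ v k))^s ≤ ENNReal.ofReal ((2/(1-2*lam))^s * ρ^s) := by
        calc (μ (cSquare Λ v k))^s ≤ (ENNReal.ofReal (2*ρ/(1-2*lam)))^s :=
              ENNReal.rpow_le_rpow hμSsize hs_pos.le
          _ = ENNReal.ofReal ((2*ρ/(1-2*lam))^s) := ENNReal.ofReal_rpow_of_pos (by positivity)
          _ = ENNReal.ofReal ((2/(1-2*lam))^s * ρ^s) := by
              congr 1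
              rw [← Real.mul_rpow (by positivity) hρ.le]
              congr 1
              ring
      calc ν n (Metric.ball x ρ) ≤ ν n (cSquare Λ v k) := hball_le
        _ ≤ C2 * (μ (cSquare Λ v k)) ^ s := hEst n k v
        _ ≤ C2 * ENNReal.ofReal ((2/(1-2*lam))^s * ρ^s) := mul_le_mul_right hfin _
        _ = C3 * ENNReal.ofReal (ρ^s) := by
            rw [hC3_def, mul_assoc, ← ENNReal.ofReal_mul (by positivity)]
  -- ========== constants are finite and positive ==========
  have hC2_ne_top : C2 ≠ ∞ := by
    rw [hC2_def]
    rw [ENNReal.add_ne_top]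
    refine ⟨ENNReal.one_ne_top, ENNReal.mul_ne_top (ENNReal.inv_ne_top.mpr hoc0) ?_⟩
    apply ENNReal.inv_ne_top.mpr
    exact (tsub_pos_of_lt hoc_lt1).ne'
  have hC3_ne_top : C3 ≠ ∞ := ENNReal.mul_ne_top hC2_ne_top ENNReal.ofReal_ne_top
  have hC3_ne0 : C3 ≠ 0 := by
    rw [hC3_def]
    apply mul_ne_zero
    · exact (lt_of_lt_of_le zero_lt_one hC2_1).ne'
    · rw [Ne, ENNReal.ofReal_eq_zero, not_le]
      positivity
  -- ========== the compact approximations Kn ==========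
  set Kn : ℕ → Set ℂ := fun n => ⋃ Q ∈ G n, (Q : Set ℂ) with hKn_def
  have hKcpt : ∀ n, IsCompact (Kn n) := by
    intro n
    have he : Kn n = ⋃ Q ∈ (↑(G n) : Set (Set ℂ)), Q := by simp [hKn_def]
    rw [he]
    apply Set.Finite.isCompact_biUnion (G n).finite_toSet
    intro Q hQ
    exact (hQfacts n Q (hGF n Q hQ)).2.2.2.2.2
  have hKanti : Antitone Kn := by
    apply antitone_nat_of_succ_le
    intro n z hz
    simp only [hKn_def, Set.mem_iUnion] at hz ⊢
    obtain ⟨Q, hQ, hzQ⟩ := hz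
    exact ⟨par n Q, (hparent n Q hQ).1, (hparent n Q hQ).2 hzQ⟩
  have hνKn : ∀ n, ν n (Kn n) = 1 := by
    intro n
    rw [hν_apply]
    have h1 : ∀ Q ∈ G n, wt n Q / μ Q * μ (Kn n ∩ Q) = wt n Q := by
      intro Q hQ
      have hQK : Kn n ∩ Q = Q := by
        apply Set.inter_eq_self_of_subset_right
        intro z hz
        simp only [hKn_def, Set.mem_iUnion]
        exact ⟨Q, hQ, hz⟩
      rw [hQK, ENNReal.div_mul_cancel (hQfacts n Q (hGF n Q hQ)).1.ne'
        (hQfacts n Q (hGF n Q hQ)).2.2.1]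
    rw [Finset.sum_congr rfl h1, hwt_total n]
  set E' : Set ℂ := ⋂ n, Kn n with hE'_def
  have hE'cpt : IsCompact E' := by
    apply (hKcpt 0).of_isClosed_subset
    · exact isClosed_iInter fun n => (hKcpt n).isClosed
    · exact Set.iInter_subset Kn 0
  have hexh : ∀ U : Set ℂ, IsOpen U → E' ⊆ U → ∃ N, Kn N ⊆ U := by
    intro U hU hsubU
    by_contra hcon
    push_neg at hcon
    have hne : ∀ n, (Kn n ∩ Uᶜ).Nonempty := by
      intro n
      obtain ⟨z, hz1, hz2⟩ := Set.not_subset.mp (hcon n)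
      exact ⟨z, hz1, hz2⟩
    have hcc : ∀ n, IsCompact (Kn n ∩ Uᶜ) := fun n =>
      (hKcpt n).inter_right hU.isClosed_compl
    have hdir : Directed (· ⊇ ·) (fun n => Kn n ∩ Uᶜ) := by
      apply Antitone.directed_ge
      intro m n hmn
      exact Set.inter_subset_inter_left _ (hKanti hmn)
    obtain ⟨z, hz⟩ := IsCompact.nonempty_iInter_of_directed_nonempty_isCompact_isClosed
      _ hdir hne hcc (fun n => (hcc n).isClosed)
    rw [Set.mem_iInter] at hz
    have hzE' : z ∈ E' := Set.mem_iInter.mpr fun n => (hz n).1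
    exact (hz 0).2 (hsubU hzE')
  have hE'E : E' ⊆ ⋂ n, ⋃ Q ∈ F n, Q := by
    apply Set.iInter_mono
    intro n z hz
    simp only [hKn_def, Set.mem_iUnion] at hz
    obtain ⟨Q, hQ, hzQ⟩ := hz
    exact Set.mem_biUnion (hGF n Q hQ) hzQ
  -- ========== the correction sequence ==========
  have hr8 : (0:ℝ) < r0/8 := by positivity
  have hC3invR_pos : 0 < (C3⁻¹).toReal :=
    ENNReal.toReal_pos (ENNReal.inv_ne_zero.mpr hC3_ne_top) (ENNReal.inv_ne_top.mpr hC3_ne0)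
  set η0s : ℝ := min ((r0/8)^s) ((C3⁻¹).toReal / 2) with hη0s_def
  have hη0s_pos : 0 < η0s := lt_min (Real.rpow_pos_of_pos hr8 s) (by positivity)
  have hofReal_half : ENNReal.ofReal ((1/2:ℝ)) = 2⁻¹ := by
    rw [one_div, ENNReal.ofReal_inv_of_pos (by norm_num), ENNReal.ofReal_ofNat]
  set ηs : ℕ → ℝ := fun i => η0s * (1/2)^(i+1) with hηs_def
  have hηs_pos : ∀ i, 0 < ηs i := fun i => by simp only [hηs_def]; positivity
  have hgeo2 : (∑' i:ℕ, ENNReal.ofReal (ηs i)) ≤ ENNReal.ofReal η0s := by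
    have hcg : ∀ i : ℕ, ENNReal.ofReal (ηs i) = ENNReal.ofReal η0s * (2⁻¹)^(i+1) := by
      intro i
      simp only [hηs_def]
      rw [ENNReal.ofReal_mul hη0s_pos.le, ENNReal.ofReal_pow (by norm_num), hofReal_half]
    rw [tsum_congr hcg, ENNReal.tsum_mul_left]
    have hps : ∀ i:ℕ, (2⁻¹:ℝ≥0∞)^(i+1) = 2⁻¹ * (2⁻¹)^i := fun i => by
      rw [pow_succ]; ring
    rw [tsum_congr hps, ENNReal.tsum_mul_left, ENNReal.tsum_geometric]
    have h2 : (1:ℝ≥0∞) - 2⁻¹ = 2⁻¹ :=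
      ENNReal.sub_eq_of_eq_add (by simp) ENNReal.inv_two_add_inv_two.symm
    rw [h2, inv_inv]
    rw [ENNReal.inv_mul_cancel (by norm_num) (by norm_num), mul_one]
  set ηr : ℕ → ℝ := fun i => (ηs i)^(1/s) with hηr_def
  have hηr_pos : ∀ i, 0 < ηr i := fun i => Real.rpow_pos_of_pos (hηs_pos i) _
  have hηr_pow : ∀ i, (ηr i)^s = ηs i := by
    intro i
    show ((ηs i)^(1/s))^s = ηs i
    rw [← Real.rpow_mul (hηs_pos i).le, one_div, inv_mul_cancel₀ hs_pos.ne', Real.rpow_one]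
  have hηr_le : ∀ i, ηr i ≤ r0/8 := by
    intro i
    have h1 : ηs i ≤ (r0/8)^s := by
      simp only [hηs_def]
      calc η0s * (1/2)^(i+1) ≤ η0s * 1 := by
            apply mul_le_mul_of_nonneg_left _ hη0s_pos.le
            apply pow_le_one₀ (by norm_num) (by norm_num)
        _ = η0s := mul_one _
        _ ≤ (r0/8)^s := min_le_left _ _
    calc ηr i = (ηs i)^(1/s) := rfl
      _ ≤ ((r0/8)^s)^(1/s) := Real.rpow_le_rpow (hηs_pos i).le h1 (by positivity)
      _ = r0/8 := by
          rw [← Real.rpow_mul hr8.le, mul_one_div_cancel hs_pos.ne', Real.rpow_one]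
  have hη0s_small : C3 * ENNReal.ofReal η0s ≤ 2⁻¹ := by
    calc C3 * ENNReal.ofReal η0s ≤ C3 * ENNReal.ofReal ((C3⁻¹).toReal / 2) := by
          apply mul_le_mul_right
          exact ENNReal.ofReal_le_ofReal (min_le_right _ _)
      _ = C3 * (C3⁻¹ / 2) := by
          rw [ENNReal.ofReal_div_of_pos (by norm_num),
            ENNReal.ofReal_toReal (ENNReal.inv_ne_top.mpr hC3_ne0), ENNReal.ofReal_ofNat]
      _ = (C3 * C3⁻¹) / 2 := by rw [mul_div_assoc]
      _ = 1/2 := by rw [ENNReal.mul_inv_cancel hC3_ne0 hC3_ne_top]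
      _ = 2⁻¹ := one_div 2
  -- ========== the covering bound ==========
  have hlb : ∀ (t : ℕ → Set ℂ), E' ⊆ ⋃ i, t i →
      (∀ i, EMetric.diam (t i) ≤ ENNReal.ofReal (r0/4)) →
      2⁻¹ / C3 ≤ ∑' i, ⨆ _ : (t i).Nonempty, EMetric.diam (t i) ^ s := by
    intro t hcov hdiam
    set d : ℕ → ℝ := fun i => (EMetric.diam (t i)).toReal with hd_def
    have hdfin : ∀ i, EMetric.diam (t i) ≠ ∞ := fun i =>
      ne_top_of_le_ne_top ENNReal.ofReal_ne_top (hdiam i)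
    have hd_nonneg : ∀ i, 0 ≤ d i := fun i => ENNReal.toReal_nonneg
    have hd_le : ∀ i, d i ≤ r0/4 := by
      intro i
      simp only [hd_def]
      exact ENNReal.toReal_le_of_le_ofReal (by positivity) (hdiam i)
    set xc : ℕ → ℂ := fun i => if h : (t i).Nonempty then h.some else 0 with hxc_def
    set U : ℕ → Set ℂ := fun i =>
      if (t i).Nonempty then Metric.ball (xc i) (d i + ηr i) else ∅ with hU_def
    have hUopen : ∀ i, IsOpen (U i) := by
      intro i
      simp only [hU_def]
      split
      · exact Metric.isOpen_ball
      · exact isOpen_empty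
    have htU : ∀ i, t i ⊆ U i := by
      intro i z hz
      have hne : (t i).Nonempty := ⟨z, hz⟩
      simp only [hU_def]
      simp only [if_pos hne]
      rw [Metric.mem_ball]
      have h1 : edist z (xc i) ≤ EMetric.diam (t i) := by
        apply EMetric.edist_le_diam_of_mem hz
        simp only [hxc_def]
        simp only [dif_pos hne]
        exact hne.some_mem
      have h2 : dist z (xc i) ≤ d i := by
        rw [dist_edist, hd_def]
        exact ENNReal.toReal_mono (hdfin i) h1
      linarith [hηr_pos i]
    obtain ⟨I, hI⟩ := hE'cpt.elim_finite_subcover U hUopen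
      (hcov.trans (Set.iUnion_mono htU))
    obtain ⟨N, hN⟩ := hexh (⋃ i ∈ I, U i) (isOpen_biUnion fun i _ => hUopen i) hI
    have hstep2 : ∀ i, ν N (U i) ≤
        C3 * ENNReal.ofReal ((d i)^s) + C3 * ENNReal.ofReal (ηs i) := by
      intro i
      by_cases hne : (t i).Nonempty
      · have hUi : U i = Metric.ball (xc i) (d i + ηr i) := by simp only [hU_def]; simp [hne]
        have hρ_pos : 0 < d i + ηr i := by
          have h1 := hd_nonneg i
          have h2 := hηr_pos i
          linarith
        have hρ_lt : d i + ηr i < r0 := by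
          have h1 := hd_le i
          have h2 := hηr_le i
          linarith
        calc ν N (U i) ≤ C3 * ENNReal.ofReal ((d i + ηr i)^s) := by
              rw [hUi]
              exact hBall N (xc i) _ hρ_pos hρ_lt
          _ ≤ C3 * (ENNReal.ofReal ((d i)^s) + ENNReal.ofReal ((ηr i)^s)) := by
              apply mul_le_mul_right
              have h1 : ENNReal.ofReal ((d i + ηr i)^s) =
                  (ENNReal.ofReal (d i) + ENNReal.ofReal (ηr i))^s := by
                rw [← ENNReal.ofReal_add (hd_nonneg i) (hηr_pos i).le,
                  ENNReal.ofReal_rpow_of_pos hρ_pos]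
              rw [h1]
              calc (ENNReal.ofReal (d i) + ENNReal.ofReal (ηr i))^s
                  ≤ (ENNReal.ofReal (d i))^s + (ENNReal.ofReal (ηr i))^s :=
                    ENNReal.rpow_add_le_add_rpow _ _ hs_pos.le hs_lt1.le
                _ = ENNReal.ofReal ((d i)^s) + ENNReal.ofReal ((ηr i)^s) := by
                    congr 1
                    · rcases eq_or_lt_of_le (hd_nonneg i) with h0 | h0
                      · rw [← h0]
                        rw [ENNReal.ofReal_zero, ENNReal.zero_rpow_of_pos hs_pos,
                          Real.zero_rpow hs_pos.ne', ENNReal.ofReal_zero]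
                      · exact ENNReal.ofReal_rpow_of_pos h0
                    · exact ENNReal.ofReal_rpow_of_pos (hηr_pos i)
          _ = C3 * ENNReal.ofReal ((d i)^s) + C3 * ENNReal.ofReal (ηs i) := by
              rw [mul_add, hηr_pow i]
      · have hUi : U i = ∅ := by
          simp only [hU_def]
          simp [hne]
        rw [hUi]
        simp
    have hmain : (1:ℝ≥0∞) ≤
        C3 * (∑' i, ENNReal.ofReal ((d i)^s)) + C3 * ENNReal.ofReal η0s := by
      calc (1:ℝ≥0∞) = ν N (Kn N) := (hνKn N).symm
        _ ≤ ν N (⋃ i ∈ I, U i) := measure_mono hN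
        _ ≤ ∑ i ∈ I, ν N (U i) := measure_biUnion_finset_le _ _
        _ ≤ ∑ i ∈ I, (C3 * ENNReal.ofReal ((d i)^s) + C3 * ENNReal.ofReal (ηs i)) :=
            Finset.sum_le_sum fun i _ => hstep2 i
        _ = (∑ i ∈ I, C3 * ENNReal.ofReal ((d i)^s)) +
            (∑ i ∈ I, C3 * ENNReal.ofReal (ηs i)) := Finset.sum_add_distrib
        _ ≤ C3 * (∑' i, ENNReal.ofReal ((d i)^s)) + C3 * ENNReal.ofReal η0s := by
            apply add_le_add
            · rw [← Finset.mul_sum]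
              apply mul_le_mul_right
              exact ENNReal.sum_le_tsum I
            · rw [← Finset.mul_sum]
              apply mul_le_mul_right
              exact le_trans (ENNReal.sum_le_tsum I) hgeo2
    have hhalf : 2⁻¹ ≤ C3 * (∑' i, ENNReal.ofReal ((d i)^s)) := by
      have h1 : 2⁻¹ + 2⁻¹ ≤ C3 * (∑' i, ENNReal.ofReal ((d i)^s)) + 2⁻¹ := by
        rw [ENNReal.inv_two_add_inv_two]
        exact hmain.trans (add_le_add_right hη0s_small _)
      exact (ENNReal.add_le_add_iff_right (by simp)).mp h1
    have hX : 2⁻¹ / C3 ≤ ∑' i, ENNReal.ofReal ((d i)^s) := by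
      rw [ENNReal.div_le_iff hC3_ne0 hC3_ne_top]
      exact hhalf.trans (le_of_eq (mul_comm _ _))
    refine hX.trans (ENNReal.tsum_le_tsum fun i => ?_)
    by_cases hne : (t i).Nonempty
    · have hsup : (⨆ _ : (t i).Nonempty, EMetric.diam (t i) ^ s) =
          EMetric.diam (t i)^s := by rw [iSup_pos hne]
      rw [hsup]
      have hdm : EMetric.diam (t i) = ENNReal.ofReal (d i) :=
        (ENNReal.ofReal_toReal (hdfin i)).symm
      rw [hdm]
      rcases eq_or_lt_of_le (hd_nonneg i) with h0 | h0
      · rw [← h0]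
        rw [Real.zero_rpow hs_pos.ne', ENNReal.ofReal_zero]
        exact zero_le
      · rw [ENNReal.ofReal_rpow_of_pos h0]
    · have hd0 : d i = 0 := by
        simp only [hd_def]
        have he : t i = ∅ := Set.not_nonempty_iff_eq_empty.mp hne
        rw [he]
        show (Metric.ediam (∅ : Set ℂ)).toReal = 0
        simp [Metric.ediam_empty]
      rw [hd0, Real.zero_rpow hs_pos.ne']
      simp
  -- ========== from covers to Hausdorff measure and dimension ==========
  have hμH : 2⁻¹ / C3 ≤ μH[s] E' := by
    rw [MeasureTheory.Measure.hausdorffMeasure_apply]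
    apply le_iSup₂_of_le (ENNReal.ofReal (r0/4)) (ENNReal.ofReal_pos.mpr (by positivity))
    exact le_iInf fun t => le_iInf fun hcov => le_iInf fun hdm => hlb t hcov hdm
  have hμHne : μH[s] E' ≠ 0 := by
    intro h0
    rw [h0] at hμH
    have hpos : (0:ℝ≥0∞) < 2⁻¹ / C3 := by
      rw [div_eq_mul_inv]
      exact ENNReal.mul_pos (by simp) (ENNReal.inv_ne_zero.mpr hC3_ne_top)
    exact hpos.ne' (le_antisymm hμH zero_le)
  have hdimH : ENNReal.ofReal s ≤ dimH E' := by
    have hcoe : ((s.toNNReal : ℝ≥0) : ℝ≥0∞) = ENNReal.ofReal s := rfl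
    rw [← hcoe]
    apply le_dimH_of_hausdorffMeasure_ne_zero
    rw [show ((s.toNNReal : ℝ≥0) : ℝ) = s from Real.coe_toNNReal s hs_pos.le]
    exact hμHne
  exact le_trans hdimH (dimH_mono hE'E)

end Hung

/-- Hungerford's lemma: under the stopping-time conditions (a), (b), (c), the set
`E = ⋂ₙ ⋃_{Q ∈ ℱₙ} Q` has Hausdorff dimension at least `1 - log c / log ε`. -/
theorem hungerford (Λ : ℕ → ℝ) (lam : ℝ) (hlam : lam < 1 / 2)
    (hΛ : ∀ n, 1 / 4 ≤ Λ n ∧ Λ n ≤ lam)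
    (μ : Measure ℂ) [IsProbabilityMeasure μ]
    (hμK : μ (cantorK Λ) = 1)
    (hμQ : ∀ (w : ℕ → Bool × Bool) (n : ℕ), μ (cSquare Λ w n) = (4 : ℝ≥0∞)⁻¹ ^ n)
    (ε c : ℝ) (hε : 0 < ε) (hεc : ε < c) (hc : c < 1)
    (F : ℕ → Set (Set ℂ))
    (hFD : ∀ n, ∀ Q ∈ F n, ∃ (m : ℕ) (w : ℕ → Bool × Bool), Q = cSquare Λ w m)
    (hdisj : ∀ n, (F n).PairwiseDisjoint id)
    (hF0 : F 0 = {cSquare Λ (fun _ => (false, false)) 0})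
    (hb : ∀ n, ∀ Q ∈ F (n + 1), ∃ Q' ∈ F n, Q ⊆ Q' ∧ μ Q ≤ ENNReal.ofReal ε * μ Q')
    (hc' : ∀ n, ∀ Q ∈ F n,
      ENNReal.ofReal c * μ Q ≤ ∑' R : {R : Set ℂ // R ∈ F (n + 1) ∧ R ⊆ Q}, μ R) :
    ENNReal.ofReal (1 - Real.log c / Real.log ε) ≤ dimH (⋂ n, ⋃ Q ∈ F n, Q) := by
  apply ENNReal.le_of_forall_nnreal_lt
  intro r hr
  have hε1 : ε < 1 := hεc.trans hc
  have hc0 : 0 < c := hε.trans hεc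
  have hlogε : Real.log ε < 0 := Real.log_neg hε hε1
  have hlogc : Real.log c < 0 := Real.log_neg hc0 hc
  have hratio_pos : 0 < Real.log c / Real.log ε :=
    div_pos_iff.mpr (Or.inr ⟨hlogc, hlogε⟩)
  have hrD : (r:ℝ) < 1 - Real.log c / Real.log ε := by
    by_contra hcon
    push_neg at hcon
    have h1 : ENNReal.ofReal (1 - Real.log c / Real.log ε) ≤ (r : ℝ≥0∞) := by
      rw [← ENNReal.ofReal_coe_nnreal]
      exact ENNReal.ofReal_le_ofReal hcon
    exact absurd hr (not_lt.mpr h1)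
  set τ : ℝ := 1 - (r:ℝ) with hτ
  have hτ_pos : 0 < τ := by
    rw [hτ]
    linarith
  have hτc : Real.exp (τ * Real.log ε) < c := by
    have h2 : Real.log c / Real.log ε < τ := by rw [hτ]; linarith
    have h1 : τ * Real.log ε < Real.log c := by
      calc τ * Real.log ε = Real.log ε * τ := mul_comm _ _
        _ < Real.log ε * (Real.log c / Real.log ε) := mul_lt_mul_of_neg_left h2 hlogε
        _ = Real.log c := by
            rw [mul_comm, div_mul_cancel₀ _ hlogε.ne]
    calc Real.exp (τ * Real.log ε) < Real.exp (Real.log c) := Real.exp_lt_exp.mpr h1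
      _ = c := Real.exp_log hc0
  set m : ℝ := max ε (Real.exp (τ * Real.log ε)) with hm
  have hmc : m < c := max_lt hεc hτc
  set cp : ℝ := (m + c)/2 with hcp
  have hmcp : m < cp := by rw [hcp]; linarith
  have hεcp : ε < cp := lt_of_le_of_lt (le_max_left _ _) hmcp
  have hcpc : cp < c := by rw [hcp]; linarith
  have hkey := Hung.dimH_ge_aux Λ lam hlam hΛ μ hμK hμQ ε c hε hεc hc F hFD hdisj hF0 hb hc'
    cp hεcp hcpc
  refine le_trans ?_ hkey
  rw [← ENNReal.ofReal_coe_nnreal]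
  apply ENNReal.ofReal_le_ofReal
  have hexpcp : Real.exp (τ * Real.log ε) < cp :=
    lt_of_le_of_lt (le_max_right _ _) hmcp
  have hlogcp : τ * Real.log ε < Real.log cp := by
    calc τ * Real.log ε = Real.log (Real.exp (τ * Real.log ε)) := (Real.log_exp _).symm
      _ < Real.log cp := Real.log_lt_log (Real.exp_pos _) hexpcp
  have hdiv : Real.log cp / Real.log ε < τ := by
    rw [div_lt_iff_of_neg hlogε]
    exact hlogcp
  rw [hτ] at hdiv
  linarith
end
end
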